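/- Every left ideal of R^{t,x^{p^s}−λ}_Θ has one of the following forms: (i) ⟨0⟩ or ⟨1⟩; (ii) a nontrivial left ideal contained in ⟨u⟩, namely R^{t,x^{p^s}−λ}_Θ(u^{(t−1)−i_1}b_{i_1}(x) − u^{(t−1)−(i_1−1)}g_{i_1}(x)) + … + R^{t,x^{p^s}−λ}_Θ(u^{(t−1)−i_n}b_{i_n}(x) − u^{(t−1)−(i_n−1)}g_{i_n}(x)), where 0 ≤ i_1 < … < i_n ≤ t−2, each b_{i_j}(x) ∈ B_λ^1 with deg b_{i_j}(x) ≤ p^s − 1, each g_{i_j}(x) ∈ R^{t,x^{p^s}−λ}_Θ, and whenever u^{(t−1)−i_j}c(x) + u^{(t−1)−(i_j−1)}g(x) lies in the sum of the generators with indices i_k, …, i_n for some j < k, then b_{i_j}(x) right-divides c(x); (iii) a nontrivial left ideal not contained in ⟨u⟩, of the form R^{t,x^{p^s}−λ}_Θ(b(x) + ug(x)) + I with b(x) ∈ B_λ^1, deg b(x) ≤ p^s − 1, g(x) ∈ R^{t,x^{p^s}−λ}_Θ, and I a left ideal as in (ii) satisfying the same right-divisibility condition. -/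

import Mathlib

open Polynomial

namespace SkewPaper

variable (p m t : ℕ) [Fact p.Prime]

/-- The finite field `F_{p^m}`. -/
abbrev Fq : Type := GaloisField p m

/-- The finite chain ring `R^t = F_{p^m}[u]/⟨u^t⟩`. -/
abbrev Rt : Type :=
  Polynomial (Fq p m) ⧸ Ideal.span {(Polynomial.X : Polynomial (Fq p m)) ^ t}

/-- The element `u` of `R^t`. -/
noncomputable def uE : Rt p m t := Ideal.Quotient.mk _ Polynomial.X

/-- The canonical embedding `F_{p^m} → R^t`. -/
noncomputable def eps : Fq p m →+* Rt p m t :=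
  (Ideal.Quotient.mk _).comp Polynomial.C

/-- The automorphism `Θ` of `R^t` extending `θ` with `Θ(u) = u`,
i.e. `Θ(a₀ + a₁u + ⋯ + a_{t-1}u^{t-1}) = θ(a₀) + θ(a₁)u + ⋯ + θ(a_{t-1})u^{t-1}`. -/
noncomputable def Th (theta : Fq p m ≃+* Fq p m) : Rt p m t ≃+* Rt p m t :=
  Ideal.quotientEquiv _ _ (Polynomial.mapEquiv theta) (by
    rw [Ideal.map_span, Set.image_singleton]
    simp [Polynomial.mapEquiv_apply])

/-- Reduction of `R^t` modulo `u`. -/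
noncomputable def rdc (ht : 0 < t) : Rt p m t →+* Fq p m :=
  Ideal.Quotient.lift _ (Polynomial.evalRingHom 0) (by
    intro a ha
    rw [Ideal.mem_span_singleton] at ha
    obtain ⟨b, rfl⟩ := ha
    simp [zero_pow ht.ne'])

/-- `a` right-divides `b`, i.e. `b = h * a` for some `h`. -/
def RDvd {A : Type*} [Mul A] (a b : A) : Prop := ∃ h, b = h * a

/-- The element `Σᵢ ι(cᵢ) X^i` determined by a coefficient family `c`. -/
noncomputable def spoly {R A : Type*} [Semiring R] [Semiring A] (iot : R →+* A) (X : A)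
    (c : ℕ →₀ R) : A :=
  c.sum fun i a => iot a * X ^ i

/-- Lift `Σᵢ ι(ε(cᵢ)) X^i` of a skew polynomial over `F_{p^m}` to the skew polynomial ring
over `R^t` (coefficient-wise, via the embedding `F_{p^m} → R^t`). -/
noncomputable def liftP {A : Type*} [Semiring A] (iot : Rt p m t →+* A) (X : A)
    (c : ℕ →₀ Fq p m) : A :=
  c.sum fun i a => iot (eps p m t a) * X ^ i

/-- `λ = λ₀ + uλ₁ + ⋯ + u^{t-1}λ_{t-1}` as an element of `R^t`. -/
noncomputable def lamOf (lc : ℕ → Fq p m) : Rt p m t :=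
  ∑ i ∈ Finset.range t, eps p m t (lc i) * uE p m t ^ i

/-- The order `|Θ|` of `Θ` in the automorphism group of `R^t`. -/
noncomputable def thOrder (theta : Fq p m ≃+* Fq p m) : ℕ :=
  orderOf (G := RingAut (Rt p m t)) (Th p m t theta)

/-- The order `|θ|` of `θ` in the automorphism group of `F_{p^m}`. -/
noncomputable def thetaOrder (theta : Fq p m ≃+* Fq p m) : ℕ :=
  orderOf (G := RingAut (Fq p m)) theta

/-- The central polynomial `f(x) = Σᵢ fᵢ x^{i·|Θ|}` in the skew polynomial ring. -/
noncomputable def fOf {A : Type*} [Ring A] (theta : Fq p m ≃+* Fq p m)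
    (iot : Rt p m t →+* A) (X : A) (fc : ℕ →₀ Rt p m t) : A :=
  fc.sum fun i a => iot a * X ^ (i * thOrder p m t theta)

/-- The image of `u` in the quotient `R^{t,f}_Θ`. -/
noncomputable def uQ {P Q : Type*} [Semiring P] [Semiring Q] (iot : Rt p m t →+* P)
    (piQ : P →+* Q) : Q :=
  piQ (iot (uE p m t))

/-- The image in `R^{t,f}_Θ` of the lift of a skew polynomial over `F_{p^m}`. -/
noncomputable def lQ {P Q : Type*} [Semiring P] [Semiring Q] (iot : Rt p m t →+* P) (X : P)
    (piQ : P →+* Q) (c : ℕ →₀ Fq p m) : Q :=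
  piQ (liftP p m t iot X c)

/-- The class in `F_{p^m}[x,θ]/⟨f̄⟩` of the skew polynomial with coefficients `c`. -/
noncomputable def lQf {Pf Qf : Type*} [Semiring Pf] [Semiring Qf] (iotf : Fq p m →+* Pf)
    (Xf : Pf) (pif : Pf →+* Qf) (c : ℕ →₀ Fq p m) : Qf :=
  pif (spoly iotf Xf c)

/-- `b(x)` right-divides `c(x)` in the quotient `F_{p^m}[x,θ]/⟨f̄⟩`. -/
def RDvdC {Pf Qf : Type*} [Semiring Pf] [Semiring Qf] (iotf : Fq p m →+* Pf) (Xf : Pf)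
    (pif : Pf →+* Qf) (b c : ℕ →₀ Fq p m) : Prop :=
  ∃ h : Qf, lQf p m iotf Xf pif c = h * lQf p m iotf Xf pif b

/-- Membership in `B_w`: representative of degree `≤ D - 1` which right-divides `w`. -/
def InB {Pf : Type*} [Semiring Pf] (iotf : Fq p m →+* Pf) (Xf : Pf) (w : Pf) (D : ℕ)
    (c : ℕ →₀ Fq p m) : Prop :=
  (∀ i, D ≤ i → c i = 0) ∧ RDvd (spoly iotf Xf c) w

/-- `deg c < deg d` for coefficient families. -/
def degLt {R : Type*} [Zero R] (c d : ℕ →₀ R) : Prop := c.support.max < d.support.max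

/-- "Type (ii)" left ideals of `R^{t,f}_Θ`: those of the form
`Σⱼ R (u^{(t-1)-i_j} b_{i_j}(x) - u^{(t-1)-(i_j-1)} g_{i_j}(x))` with
`0 ≤ i₁ < ⋯ < i_n ≤ t-2`, `b_{i_j} ∈ B_w` of degree `≤ D - 1`, together with the
right-divisibility side condition. -/
def TypeTwo (p m t : ℕ) [Fact p.Prime] {P Pf Q Qf : Type*} [Ring P] [Ring Pf] [Ring Q] [Ring Qf]
    (iot : Rt p m t →+* P) (Xp : P) (piQ : P →+* Q)
    (iotf : Fq p m →+* Pf) (Xf : Pf) (pif : Pf →+* Qf)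
    (w : Pf) (D : ℕ) (J : Ideal Q) : Prop :=
  ∃ (n : ℕ) (idx : Fin n → ℕ) (bcs : Fin n → (ℕ →₀ Fq p m)) (gs : Fin n → Q),
    StrictMono idx ∧ (∀ j, idx j ≤ t - 2) ∧ (∀ j, InB p m iotf Xf w D (bcs j)) ∧
    J = Submodule.span Q (Set.range fun j : Fin n =>
        uQ p m t iot piQ ^ (t - 1 - idx j) * lQ p m t iot Xp piQ (bcs j)
          - uQ p m t iot piQ ^ (t - idx j) * gs j) ∧
    ∀ (j k : Fin n), j < k → ∀ (cc : ℕ →₀ Fq p m) (g : Q),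
      uQ p m t iot piQ ^ (t - 1 - idx j) * lQ p m t iot Xp piQ cc
          + uQ p m t iot piQ ^ (t - idx j) * g ∈
        Submodule.span Q ((fun l : Fin n =>
          uQ p m t iot piQ ^ (t - 1 - idx l) * lQ p m t iot Xp piQ (bcs l)
            - uQ p m t iot piQ ^ (t - idx l) * gs l) '' {l | k ≤ l}) →
      RDvdC p m iotf Xf pif (bcs j) cc

/-! ### Generic skew polynomial lemmas -/

section ConvSec

variable {R : Type*} [Semiring R] {A : Type*} [Semiring A]

theorem spoly_zero (iota : R →+* A) (X : A) : spoly iota X 0 = 0 :=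
  Finsupp.sum_zero_index

theorem spoly_add (iota : R →+* A) (X : A) (c d : ℕ →₀ R) :
    spoly iota X (c + d) = spoly iota X c + spoly iota X d :=
  Finsupp.sum_add_index' (by simp) (by intros; rw [map_add, add_mul])

/-- `spoly` as an additive monoid hom. -/
noncomputable def spolyHom (iota : R →+* A) (X : A) : (ℕ →₀ R) →+ A where
  toFun := spoly iota X
  map_zero' := spoly_zero iota X
  map_add' := spoly_add iota X

theorem spolyHom_apply (iota : R →+* A) (X : A) (c : ℕ →₀ R) :
    spolyHom iota X c = spoly iota X c := rfl

theorem spoly_single (iota : R →+* A) (X : A) (i : ℕ) (a : R) :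
    spoly iota X (Finsupp.single i a) = iota a * X ^ i :=
  Finsupp.sum_single_index (by simp)

theorem X_pow_iota (th : R ≃+* R) (iota : R →+* A) (X : A)
    (hX : ∀ a, X * iota a = iota (th a) * X) (i : ℕ) (a : R) :
    X ^ i * iota a = iota ((th ^ i) a) * X ^ i := by
  induction i generalizing a with
  | zero => simp
  | succ n ih =>
      have h1 : (th ^ (n + 1)) a = (th ^ n) (th a) := by
        rw [pow_succ]; rfl
      rw [pow_succ, mul_assoc, hX, ← mul_assoc, ih, h1, mul_assoc]

theorem mono_mul (th : R ≃+* R) (iota : R →+* A) (X : A)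
    (hX : ∀ a, X * iota a = iota (th a) * X) (i j : ℕ) (a b : R) :
    (iota a * X ^ i) * (iota b * X ^ j) = iota (a * (th ^ i) b) * X ^ (i + j) := by
  rw [mul_assoc, ← mul_assoc (X ^ i), X_pow_iota th iota X hX]
  simp only [map_mul, pow_add, mul_assoc]

/-- Skew convolution of coefficient families. -/
noncomputable def conv (th : R ≃+* R) (d b : ℕ →₀ R) : ℕ →₀ R :=
  d.sum fun i a =>
    Finsupp.mapDomain (fun j => i + j) (b.mapRange (fun x => a * (th ^ i) x) (by simp))

theorem mapDomain_shift_apply (v : ℕ →₀ R) (i x : ℕ) :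
    Finsupp.mapDomain (fun j => i + j) v x = if i ≤ x then v (x - i) else 0 := by
  split
  · next h =>
      have hx : x = i + (x - i) := by omega
      rw [hx, Finsupp.mapDomain_apply (fun a b hab => by simpa using hab)]
      congr 1
      omega
  · next h =>
      refine Finsupp.mapDomain_notin_range _ _ ?_
      rintro ⟨j, hj⟩
      exact h (le_of_le_of_eq (Nat.le_add_right i j) hj)

theorem conv_apply (th : R ≃+* R) (d b : ℕ →₀ R) (x : ℕ) :
    conv th d b x = d.sum fun i a => if i ≤ x then a * (th ^ i) (b (x - i)) else 0 := by
  unfold conv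
  rw [Finsupp.sum_apply]
  refine Finset.sum_congr rfl fun i hi => ?_
  simp only [mapDomain_shift_apply, Finsupp.mapRange_apply]

theorem conv_zero_left (th : R ≃+* R) (b : ℕ →₀ R) : conv th 0 b = 0 :=
  Finsupp.sum_zero_index

theorem conv_spec (th : R ≃+* R) (iota : R →+* A) (X : A)
    (hX : ∀ a, X * iota a = iota (th a) * X) (d b : ℕ →₀ R) :
    spoly iota X (conv th d b) = spoly iota X d * spoly iota X b := by
  unfold conv
  rw [← spolyHom_apply, map_finsuppSum]
  have hterm : ∀ i a, spolyHom iota X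
      (Finsupp.mapDomain (fun j => i + j) (b.mapRange (fun x => a * (th ^ i) x) (by simp)))
      = (iota a * X ^ i) * spoly iota X b := by
    intro i a
    rw [spolyHom_apply]
    show spoly iota X _ = _
    unfold spoly
    rw [Finsupp.sum_mapDomain_index (by simp) (by intros; rw [map_add, add_mul])]
    rw [Finsupp.sum_mapRange_index (by simp)]
    rw [Finsupp.mul_sum, Finsupp.sum, Finsupp.sum]
    refine Finset.sum_congr rfl fun j hj => ?_
    exact (mono_mul th iota X hX i j a (b j)).symm
  unfold spoly
  rw [Finsupp.sum_mul, Finsupp.sum, Finsupp.sum]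
  refine Finset.sum_congr rfl fun i hi => ?_
  exact hterm i (d i)

theorem conv_apply_eq_zero (th : R ≃+* R) {d b : ℕ →₀ R} {N D : ℕ}
    (hd : ∀ k, N < k → d k = 0) (hb : ∀ k, D < k → b k = 0) {x : ℕ} (hx : N + D < x) :
    conv th d b x = 0 := by
  rw [conv_apply]
  refine Finset.sum_eq_zero fun i hi => ?_
  show (if i ≤ x then d i * (th ^ i) (b (x - i)) else 0) = 0
  have hiN : i ≤ N := by
    by_contra hc
    exact (Finsupp.mem_support_iff.mp hi) (hd i (by omega))
  rw [if_pos (by omega)]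
  have : b (x - i) = 0 := hb _ (by omega)
  rw [this, map_zero, mul_zero]

theorem conv_apply_top (th : R ≃+* R) {d b : ℕ →₀ R} {N D : ℕ}
    (hd : ∀ k, N < k → d k = 0) (hb : ∀ k, D < k → b k = 0) :
    conv th d b (N + D) = d N * (th ^ N) (b D) := by
  rw [conv_apply]
  have hzero : ∀ i ∈ d.support, i ≠ N →
      (if i ≤ N + D then d i * (th ^ i) (b (N + D - i)) else 0) = 0 := by
    intro i hi hiN2
    have hiN : i ≤ N := by
      by_contra hc
      exact (Finsupp.mem_support_iff.mp hi) (hd i (by omega))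
    rw [if_pos (by omega)]
    have : b (N + D - i) = 0 := hb _ (by omega)
    rw [this, map_zero, mul_zero]
  rcases eq_or_ne (d N) 0 with h0 | h0
  · rw [h0, zero_mul]
    refine Finset.sum_eq_zero fun i hi => ?_
    show (if i ≤ N + D then d i * (th ^ i) (b (N + D - i)) else 0) = 0
    rcases eq_or_ne i N with rfl | hne
    · rw [h0]; split <;> simp
    · exact hzero i hi hne
  · rw [Finsupp.sum, Finset.sum_eq_single_of_mem N (Finsupp.mem_support_iff.mpr h0)]
    · show (if N ≤ N + D then d N * (th ^ N) (b (N + D - N)) else 0) = _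
      rw [if_pos (by omega), Nat.add_sub_cancel_left]
    · intro i hi hiN2
      exact hzero i hi hiN2

theorem spoly_scale {R : Type*} [Semiring R] {A : Type*} [Semiring A]
    (iota : R →+* A) (X : A) (mu : R) (c : ℕ →₀ R) :
    spoly iota X (c.mapRange (fun x => mu * x) (by simp)) = iota mu * spoly iota X c := by
  unfold spoly
  rw [Finsupp.sum_mapRange_index (by simp), Finsupp.mul_sum, Finsupp.sum, Finsupp.sum]
  refine Finset.sum_congr rfl fun i hi => ?_
  show iota (mu * c i) * X ^ i = iota mu * (iota (c i) * X ^ i)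
  rw [map_mul, mul_assoc]

theorem const_mul_X_pow {R : Type*} [Semiring R] {A : Type*} [Semiring A]
    (th : R ≃+* R) (iota : R →+* A) (X : A)
    (hX : ∀ a, X * iota a = iota (th a) * X) (a : R) (ha : th a = a) (k : ℕ) :
    (iota a * X) ^ k = iota (a ^ k) * X ^ k := by
  induction k with
  | zero => simp
  | succ n ih =>
      have h1 : th (a ^ n) = a ^ n := by rw [map_pow, ha]
      rw [pow_succ' (iota a * X) n, ih, ← mul_assoc, mul_assoc (iota a) X, hX, h1,
        ← mul_assoc, ← map_mul, mul_assoc, ← pow_succ']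
      rw [pow_succ' a n, pow_succ' X n]

theorem spoly_inj {R : Type*} [Semiring R] {A : Type*} [Semiring A]
    (iota : R →+* A) (X : A) (hrep : ∀ g : A, ∃! c : ℕ →₀ R, g = spoly iota X c)
    {c d : ℕ →₀ R} (h : spoly iota X c = spoly iota X d) : c = d :=
  (hrep (spoly iota X d)).unique h.symm rfl

theorem spoly_sub {R : Type*} [Ring R] {A : Type*} [Ring A]
    (iota : R →+* A) (X : A) (c d : ℕ →₀ R) :
    spoly iota X (c - d) = spoly iota X c - spoly iota X d := by
  rw [← spolyHom_apply, map_sub, spolyHom_apply, spolyHom_apply]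

theorem spoly_pair {R : Type*} [Ring R] {A : Type*} [Ring A]
    (iota : R →+* A) (X : A) (n : ℕ) (v : R) :
    spoly iota X (Finsupp.single n (1 : R) - Finsupp.single 0 v) = X ^ n - iota v := by
  rw [spoly_sub, spoly_single, spoly_single, map_one, one_mul, pow_zero, mul_one]

end ConvSec
/-! ### Facts about `R^t`, `F_{p^m}`, `Θ`, `λ` -/

section RtSec

variable (p m t : ℕ) [Fact p.Prime]

theorem uE_pow_t : uE p m t ^ t = 0 := by
  unfold uE
  rw [← map_pow, Ideal.Quotient.eq_zero_iff_mem]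
  exact Ideal.subset_span (Set.mem_singleton _)

theorem rdc_eps (ht : 0 < t) (a : Fq p m) : rdc p m t ht (eps p m t a) = a := by
  unfold rdc eps
  simp

theorem rdc_u (ht : 0 < t) : rdc p m t ht (uE p m t) = 0 := by
  unfold rdc uE
  simp

theorem eq_u_mul_of_rdc_eq_zero (ht : 0 < t) (r : Rt p m t)
    (h : rdc p m t ht r = 0) : ∃ r', r = uE p m t * r' := by
  obtain ⟨g, rfl⟩ := Ideal.Quotient.mk_surjective r
  have h0 : g.coeff 0 = 0 := by
    have : rdc p m t ht ((Ideal.Quotient.mk _) g) = g.eval 0 := by unfold rdc; simp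
    rw [this] at h
    rwa [Polynomial.coeff_zero_eq_eval_zero]
  obtain ⟨g', rfl⟩ := Polynomial.X_dvd_iff.mpr h0
  exact ⟨Ideal.Quotient.mk _ g', by rw [map_mul]; rfl⟩

open Classical in
noncomputable def dvu (ht : 0 < t) (r : Rt p m t) : Rt p m t :=
  if r = 0 then 0 else
    Classical.choose (eq_u_mul_of_rdc_eq_zero p m t ht (r - eps p m t (rdc p m t ht r))
      (by rw [map_sub, rdc_eps, sub_self]))

theorem dvu_zero (ht : 0 < t) : dvu p m t ht 0 = 0 := by
  unfold dvu
  rw [if_pos rfl]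

theorem dvu_spec (ht : 0 < t) (r : Rt p m t) :
    r = eps p m t (rdc p m t ht r) + uE p m t * dvu p m t ht r := by
  unfold dvu
  split
  · next h => subst h; simp
  · next h =>
      have hs := Classical.choose_spec (eq_u_mul_of_rdc_eq_zero p m t ht
        (r - eps p m t (rdc p m t ht r)) (by rw [map_sub, rdc_eps, sub_self]))
      rw [← hs]
      ring

variable (theta : Fq p m ≃+* Fq p m)

theorem Th_mk (g : Polynomial (Fq p m)) :
    Th p m t theta (Ideal.Quotient.mk _ g) = Ideal.Quotient.mk _ (g.map theta) := by
  unfold Th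
  rw [Ideal.quotientEquiv_mk]
  rfl

theorem Th_eps (a : Fq p m) : Th p m t theta (eps p m t a) = eps p m t (theta a) := by
  unfold eps
  simp [Th_mk]

theorem Th_u : Th p m t theta (uE p m t) = uE p m t := by
  unfold uE
  simp [Th_mk]

theorem Th_pow_eps (i : ℕ) (a : Fq p m) :
    (Th p m t theta ^ i) (eps p m t a) = eps p m t ((theta ^ i) a) := by
  induction i generalizing a with
  | zero => rfl
  | succ n ih =>
      have h1 : ∀ r : Rt p m t, (Th p m t theta ^ (n + 1)) r = (Th p m t theta ^ n) (Th p m t theta r) := by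
        intro r; rw [pow_succ]; rfl
      have h2 : (theta ^ (n + 1)) a = (theta ^ n) (theta a) := by rw [pow_succ]; rfl
      rw [h1, h2, Th_eps, ih]

theorem Th_pow_u (i : ℕ) : (Th p m t theta ^ i) (uE p m t) = uE p m t := by
  induction i with
  | zero => rfl
  | succ n ih =>
      have h1 : ∀ r : Rt p m t, (Th p m t theta ^ (n + 1)) r = (Th p m t theta ^ n) (Th p m t theta r) := by
        intro r; rw [pow_succ]; rfl
      rw [h1, Th_u, ih]

theorem rdc_Th (ht : 0 < t) (r : Rt p m t) :
    rdc p m t ht (Th p m t theta r) = theta (rdc p m t ht r) := by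
  obtain ⟨g, rfl⟩ := Ideal.Quotient.mk_surjective r
  rw [Th_mk]
  have h1 : ∀ g', rdc p m t ht ((Ideal.Quotient.mk _) g') = Polynomial.eval 0 g' := by
    intro g'; unfold rdc; simp
  rw [h1, h1, Polynomial.eval_map, Polynomial.eval₂_at_zero,
    ← Polynomial.coeff_zero_eq_eval_zero]
  rfl

theorem rdc_Th_pow (ht : 0 < t) (i : ℕ) (r : Rt p m t) :
    rdc p m t ht ((Th p m t theta ^ i) r) = (theta ^ i) (rdc p m t ht r) := by
  induction i generalizing r with
  | zero => rfl
  | succ n ih =>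
      have h1 : (Th p m t theta ^ (n + 1)) r = (Th p m t theta ^ n) (Th p m t theta r) := by
        rw [pow_succ]; rfl
      have h2 : ∀ a, (theta ^ (n + 1)) a = (theta ^ n) (theta a) := by
        intro a; rw [pow_succ]; rfl
      rw [h1, ih, rdc_Th, h2]

variable (lc : ℕ → Fq p m)

theorem rdc_lam (ht : 0 < t) : rdc p m t ht (lamOf p m t lc) = lc 0 := by
  unfold lamOf
  rw [map_sum]
  rw [Finset.sum_eq_single_of_mem 0 (Finset.mem_range.mpr ht)]
  · rw [map_mul, rdc_eps, map_pow, pow_zero, mul_one]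
  · intro i _ hi
    rw [map_mul, map_pow, rdc_u, zero_pow hi, mul_zero]

theorem theta_lc0 (ht : 0 < t) (hTlam : Th p m t theta (lamOf p m t lc) = lamOf p m t lc) :
    theta (lc 0) = lc 0 := by
  have := rdc_Th p m t theta ht (lamOf p m t lc)
  rw [hTlam, rdc_lam] at this
  exact this.symm

theorem Th_pow_lam (hTlam : Th p m t theta (lamOf p m t lc) = lamOf p m t lc) (i : ℕ) :
    (Th p m t theta ^ i) (lamOf p m t lc) = lamOf p m t lc := by
  induction i with
  | zero => rfl
  | succ n ih =>
      have h1 : ∀ r : Rt p m t, (Th p m t theta ^ (n + 1)) r = (Th p m t theta ^ n) (Th p m t theta r) := by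
        intro r; rw [pow_succ]; rfl
      rw [h1, hTlam, ih]

theorem lam_decomp (ht : 0 < t) :
    lamOf p m t lc = eps p m t (lc 0) + uE p m t * dvu p m t ht (lamOf p m t lc) := by
  have h := dvu_spec p m t ht (lamOf p m t lc)
  rwa [rdc_lam] at h

theorem fq_pow_card (hm : 0 < m) (a : Fq p m) : a ^ (p ^ m) = a := by
  haveI : Fintype (Fq p m) := Fintype.ofFinite _
  have hcard : Fintype.card (Fq p m) = p ^ m := by
    rw [← Nat.card_eq_fintype_card]
    exact GaloisField.card p m hm.ne'
  rw [← hcard]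
  exact FiniteField.pow_card a

theorem fq_pow_card_mul (hm : 0 < m) (a : Fq p m) (k : ℕ) : a ^ (p ^ (m * k)) = a := by
  induction k with
  | zero => simp
  | succ n ih =>
      have : m * (n + 1) = m * n + m := by ring
      rw [this, pow_add, pow_mul, ih, fq_pow_card p m hm]

theorem key_exp (hm : 0 < m) (s : ℕ) (a : Fq p m) (ha : a ≠ 0) :
    ((a ^ p ^ (m - s % m))⁻¹) ^ p ^ s = a⁻¹ := by
  rw [inv_pow, ← pow_mul, ← pow_add]
  have h1 : s % m + m * (s / m) = s := Nat.mod_add_div s m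
  have h2 : s % m < m := Nat.mod_lt _ hm
  have harith : (m - s % m) + s = m * (1 + s / m) := by
    calc (m - s % m) + s = (m - s % m) + (s % m + m * (s / m)) := by rw [h1]
    _ = ((m - s % m) + s % m) + m * (s / m) := by rw [add_assoc]
    _ = m + m * (s / m) := by rw [Nat.sub_add_cancel h2.le]
    _ = m * (1 + s / m) := by ring
  rw [harith, fq_pow_card_mul p m hm]

theorem liftP_as_spoly {A : Type*} [Semiring A] (iot : Rt p m t →+* A) (X : A)
    (c : ℕ →₀ Fq p m) : liftP p m t iot X c = spoly (iot.comp (eps p m t)) X c := rfl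

theorem liftP_conv {A : Type*} [Semiring A] (iot : Rt p m t →+* A) (X : A)
    (hX : ∀ r, X * iot r = iot (Th p m t theta r) * X) (d b : ℕ →₀ Fq p m) :
    liftP p m t iot X (conv theta d b) = liftP p m t iot X d * liftP p m t iot X b := by
  rw [liftP_as_spoly, liftP_as_spoly, liftP_as_spoly]
  refine conv_spec theta (iot.comp (eps p m t)) X ?_ d b
  intro a
  show X * iot (eps p m t a) = iot (eps p m t (theta a)) * X
  rw [hX, Th_eps]

theorem liftP_mapRange {A : Type*} [Semiring A] (iot : Rt p m t →+* A) (X : A)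
    (c : ℕ →₀ Fq p m) :
    liftP p m t iot X c = spoly iot X (c.mapRange (eps p m t) (map_zero _)) := by
  unfold liftP spoly
  rw [Finsupp.sum_mapRange_index (by simp)]

end RtSec
/-! ### The skew polynomial ring over the field, and its quotient -/

section PfSec

variable (p m s : ℕ) [Fact p.Prime] (theta : Fq p m ≃+* Fq p m) (lc : ℕ → Fq p m)
variable {Pf : Type*} [Ring Pf] (iotf : Fq p m →+* Pf) (Xf : Pf)

/-- The coefficient family of `x^{p^s} - λ₀`. -/
noncomputable def ffin : ℕ →₀ Fq p m :=
  Finsupp.single (p ^ s) 1 - Finsupp.single 0 (lc 0)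

theorem ffin_bound : ∀ k, p ^ s < k → ffin p m s lc k = 0 := by
  intro k hk
  have h1 : (0:ℕ) < p ^ s := pow_pos (Fact.out (p := p.Prime)).pos s
  unfold ffin
  rw [Finsupp.sub_apply, Finsupp.single_apply, Finsupp.single_apply,
    if_neg (by omega), if_neg (by omega), sub_zero]

theorem ffin_top : ffin p m s lc (p ^ s) = 1 := by
  have h1 : (0:ℕ) < p ^ s := pow_pos (Fact.out (p := p.Prime)).pos s
  unfold ffin
  rw [Finsupp.sub_apply, Finsupp.single_eq_same, Finsupp.single_apply, if_neg (by omega),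
    sub_zero]

theorem ffin_ne_zero : ffin p m s lc ≠ 0 := by
  intro h
  have h1 := ffin_top p m s lc
  rw [h, Finsupp.zero_apply] at h1
  exact one_ne_zero h1.symm

theorem spoly_ffin : spoly iotf Xf (ffin p m s lc) = Xf ^ p ^ s - iotf (lc 0) := by
  unfold ffin
  rw [← spolyHom_apply, map_sub, spolyHom_apply, spolyHom_apply, spoly_single, spoly_single,
    map_one, one_mul, pow_zero, mul_one]

/-- Core degree argument: a convolution with `ffin` that is bounded by `p^s` vanishes. -/
theorem core_conv_zero (d c : ℕ →₀ Fq p m) (hc : c = conv theta d (ffin p m s lc))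
    (hb : ∀ i, p ^ s ≤ i → c i = 0) : c = 0 ∧ d = 0 := by
  have hd : d = 0 := by
    by_contra hd0
    have hsupp : d.support.Nonempty := Finsupp.support_nonempty_iff.mpr hd0
    set N := d.support.max' hsupp with hN
    have hdN : d N ≠ 0 := Finsupp.mem_support_iff.mp (d.support.max'_mem hsupp)
    have hdhi : ∀ k, N < k → d k = 0 := by
      intro k hk
      by_contra hc0
      exact absurd (d.support.le_max' k (Finsupp.mem_support_iff.mpr hc0)) (by omega)
    have htop : conv theta d (ffin p m s lc) (N + p ^ s) = d N * (theta ^ N) (ffin p m s lc (p ^ s)) :=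
      conv_apply_top theta hdhi (ffin_bound p m s lc)
    rw [ffin_top, map_one, mul_one] at htop
    have := hb (N + p ^ s) (by omega)
    rw [hc, htop] at this
    exact hdN this
  subst hd
  rw [conv_zero_left] at hc
  exact ⟨hc, rfl⟩

variable {Qf : Type*} [Ring Qf] (pif : Pf →+* Qf)

theorem mem_ker_pif (hkerf : RingHom.ker pif = Ideal.span {Xf ^ p ^ s - iotf (lc 0)})
    (z : Pf) : pif z = 0 ↔ ∃ h, z = h * (Xf ^ p ^ s - iotf (lc 0)) := by
  constructor
  · intro h
    have : z ∈ RingHom.ker pif := h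
    rw [hkerf] at this
    obtain ⟨a, ha⟩ := Submodule.mem_span_singleton.mp this
    exact ⟨a, by rw [← ha]; rfl⟩
  · rintro ⟨h, rfl⟩
    have hmem : Xf ^ p ^ s - iotf (lc 0) ∈ RingHom.ker pif := by
      rw [hkerf]
      exact Submodule.mem_span_singleton_self _
    rw [map_mul, show pif (Xf ^ p ^ s - iotf (lc 0)) = 0 from hmem, mul_zero]

theorem spoly_injective (hPfrep : ∀ g : Pf, ∃! c : ℕ →₀ Fq p m, g = spoly iotf Xf c)
    {c d : ℕ →₀ Fq p m} (h : spoly iotf Xf c = spoly iotf Xf d) : c = d :=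
  ((hPfrep (spoly iotf Xf d)).unique h.symm rfl)

theorem lQf_eq_zero (hXiotf : ∀ a, Xf * iotf a = iotf (theta a) * Xf)
    (hPfrep : ∀ g : Pf, ∃! c : ℕ →₀ Fq p m, g = spoly iotf Xf c)
    (hkerf : RingHom.ker pif = Ideal.span {Xf ^ p ^ s - iotf (lc 0)})
    (c : ℕ →₀ Fq p m) (hb : ∀ i, p ^ s ≤ i → c i = 0)
    (h0 : pif (spoly iotf Xf c) = 0) : c = 0 := by
  obtain ⟨h, hh⟩ := (mem_ker_pif p m s lc iotf Xf pif hkerf _).mp h0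
  obtain ⟨dq, hdq, -⟩ := hPfrep h
  rw [hdq, ← spoly_ffin p m s lc iotf Xf, ← conv_spec theta iotf Xf hXiotf] at hh
  exact (core_conv_zero p m s theta lc dq c
    (spoly_injective p m iotf Xf hPfrep hh) hb).1

/-- Euclidean division by a monic skew polynomial. -/
theorem div_mod (hXiotf : ∀ a, Xf * iotf a = iotf (theta a) * Xf)
    {D : ℕ} (b : ℕ →₀ Fq p m) (hbD : b D = 1) (hbtop : ∀ i, D < i → b i = 0) :
    ∀ (n : ℕ) (c : ℕ →₀ Fq p m), (∀ i, n ≤ i → c i = 0) →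
      ∃ (q : Pf) (c' : ℕ →₀ Fq p m),
        spoly iotf Xf c = q * spoly iotf Xf b + spoly iotf Xf c' ∧ ∀ i, D ≤ i → c' i = 0 := by
  intro n
  induction n with
  | zero =>
      intro c hc
      exact ⟨0, c, by rw [zero_mul, zero_add], fun i _ => hc i (Nat.zero_le i)⟩
  | succ k ih =>
      intro c hc
      by_cases hD : k + 1 ≤ D
      · exact ⟨0, c, by rw [zero_mul, zero_add], fun i hi => hc i (by omega)⟩
      · push_neg at hD
        have hDk : D ≤ k := by omega
        set a := c k with ha
        set e := conv theta (Finsupp.single (k - D) a) b with he0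
        have hsingle_top : ∀ j, (k - D) < j → Finsupp.single (k - D) a j = 0 := by
          intro j hj
          rw [Finsupp.single_apply, if_neg (by omega)]
        have he_top : e k = a := by
          have h4 := conv_apply_top theta (d := Finsupp.single (k - D) a) (b := b)
            hsingle_top hbtop
          rw [Finsupp.single_eq_same, hbD, map_one, mul_one] at h4
          have h5 : k - D + D = k := by omega
          calc e k = conv theta (Finsupp.single (k - D) a) b (k - D + D) := by rw [he0, h5]
          _ = a := h4
        have he_hi : ∀ x, k < x → e x = 0 := by
          intro x hx
          exact conv_apply_eq_zero theta hsingle_top hbtop (by omega)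
        have hc2 : ∀ i, k ≤ i → (c - e) i = 0 := by
          intro i hi
          rcases eq_or_lt_of_le hi with rfl | hlt
          · rw [Finsupp.sub_apply, he_top, ha, sub_self]
          · rw [Finsupp.sub_apply, hc i (by omega), he_hi i (by omega), sub_zero]
        obtain ⟨q2, c', heq, hc'⟩ := ih (c - e) hc2
        refine ⟨q2 + iotf a * Xf ^ (k - D), c', ?_, hc'⟩
        have hce : c = (c - e) + e := by rw [sub_add_cancel]
        calc spoly iotf Xf c = spoly iotf Xf ((c - e) + e) := by rw [← hce]
          _ = spoly iotf Xf (c - e) + spoly iotf Xf e := spoly_add iotf Xf _ _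
          _ = (q2 * spoly iotf Xf b + spoly iotf Xf c') + spoly iotf Xf e := by rw [heq]
          _ = (q2 * spoly iotf Xf b + spoly iotf Xf c')
              + (iotf a * Xf ^ (k - D)) * spoly iotf Xf b := by
                rw [he0, conv_spec theta iotf Xf hXiotf, spoly_single]
          _ = (q2 + iotf a * Xf ^ (k - D)) * spoly iotf Xf b + spoly iotf Xf c' := by
                noncomm_ring

/-- Classification of (nonzero) left-ideal-like subsets of `Qf`. -/
theorem classify (hXiotf : ∀ a, Xf * iotf a = iotf (theta a) * Xf)
    (hPfrep : ∀ g : Pf, ∃! c : ℕ →₀ Fq p m, g = spoly iotf Xf c)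
    (hpif : Function.Surjective pif)
    (hkerf : RingHom.ker pif = Ideal.span {Xf ^ p ^ s - iotf (lc 0)})
    (L : Set Qf) (hadd : ∀ y ∈ L, ∀ z ∈ L, y + z ∈ L)
    (hsmul : ∀ (q : Qf), ∀ y ∈ L, q * y ∈ L)
    (hne : ∃ y ∈ L, y ≠ 0) :
    ∃ b : ℕ →₀ Fq p m, (∀ i, p ^ s ≤ i → b i = 0) ∧
      (∃ hq : Pf, Xf ^ p ^ s - iotf (lc 0) = hq * spoly iotf Xf b) ∧
      (∀ y : Qf, y ∈ L ↔ ∃ h : Qf, y = h * pif (spoly iotf Xf b)) := by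
  classical
  set M : Set Pf := {g | pif g ∈ L} with hM
  have hMmul : ∀ (q : Pf), ∀ g ∈ M, q * g ∈ M := by
    intro q g hg
    show pif (q * g) ∈ L
    rw [map_mul]
    exact hsmul _ _ hg
  have h0L : (0 : Qf) ∈ L := by
    obtain ⟨y, hy, -⟩ := hne
    have := hsmul 0 y hy
    rwa [zero_mul] at this
  have hMsub : ∀ g ∈ M, ∀ g' ∈ M, g - g' ∈ M := by
    intro g hg g' hg'
    show pif (g - g') ∈ L
    rw [map_sub, sub_eq_add_neg]
    refine hadd _ hg _ ?_
    have := hsmul (-1) _ hg'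
    rwa [neg_one_mul] at this
  have hfM : spoly iotf Xf (ffin p m s lc) ∈ M := by
    show pif _ ∈ L
    have : pif (spoly iotf Xf (ffin p m s lc)) = 0 := by
      rw [spoly_ffin]
      exact (mem_ker_pif p m s lc iotf Xf pif hkerf _).mpr ⟨1, (one_mul _).symm⟩
    rw [this]
    exact h0L
  have hEx : ∃ n : ℕ, ∃ c : ℕ →₀ Fq p m, c ≠ 0 ∧ (∀ i, n < i → c i = 0) ∧
      spoly iotf Xf c ∈ M :=
    ⟨p ^ s, ffin p m s lc, ffin_ne_zero p m s lc, ffin_bound p m s lc, hfM⟩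
  set D := Nat.find hEx with hD
  obtain ⟨c, hcne, hcbd, hcM⟩ := Nat.find_spec hEx
  have hDle : D ≤ p ^ s :=
    Nat.find_le ⟨ffin p m s lc, ffin_ne_zero p m s lc, ffin_bound p m s lc, hfM⟩
  have hcD : c D ≠ 0 := by
    intro h0
    rcases Nat.eq_zero_or_pos D with hD0 | hDpos
    · apply hcne
      ext i
      rcases Nat.eq_zero_or_pos i with rfl | hi
      · rw [hD0] at h0
        simpa using h0
      · exact hcbd i (by omega)
    · refine Nat.find_min hEx (m := D - 1) (by omega) ?_
      refine ⟨c, hcne, fun i hi => ?_, hcM⟩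
      rcases eq_or_ne i D with rfl | hne
      · exact h0
      · exact hcbd i (by omega)
  -- normalize to monic
  set b := c.mapRange (fun x => (c D)⁻¹ * x) (by simp) with hb
  have hbD : b D = 1 := by
    rw [hb, Finsupp.mapRange_apply, inv_mul_cancel₀ hcD]
  have hbtop : ∀ i, D < i → b i = 0 := by
    intro i hi
    rw [hb, Finsupp.mapRange_apply, hcbd i hi, mul_zero]
  have hbM : spoly iotf Xf b ∈ M := by
    rw [hb, spoly_scale]
    exact hMmul _ _ hcM
  have hMb : ∀ g ∈ M, ∃ q : Pf, g = q * spoly iotf Xf b := by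
    intro g hg
    obtain ⟨cg, hcg, -⟩ := hPfrep g
    have hbound : ∀ i, cg.support.sup id + 1 ≤ i → cg i = 0 := by
      intro i hi
      by_contra h0
      have h2 := Finset.le_sup (f := id) (Finsupp.mem_support_iff.mpr h0)
      simp only [id] at h2
      omega
    obtain ⟨q, c', heq, hc'⟩ := div_mod p m theta iotf Xf hXiotf b hbD hbtop _ cg hbound
    have hc'M : spoly iotf Xf c' ∈ M := by
      have h1 : spoly iotf Xf c' = g - q * spoly iotf Xf b := by
        rw [hcg, heq]; abel
      rw [h1]
      exact hMsub _ hg _ (hMmul q _ hbM)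
    by_cases h0 : c' = 0
    · refine ⟨q, ?_⟩
      rw [hcg, heq, h0, spoly_zero, add_zero]
    · exfalso
      rcases Nat.eq_zero_or_pos D with hD0 | hDpos
      · exact h0 (Finsupp.ext fun i => hc' i (by omega))
      · exact Nat.find_min hEx (m := D - 1) (by omega)
          ⟨c', h0, fun i hi => hc' i (by omega), hc'M⟩
  have hfb : ∃ q0 : Pf, Xf ^ p ^ s - iotf (lc 0) = q0 * spoly iotf Xf b := by
    obtain ⟨q0, hq0⟩ := hMb _ hfM
    exact ⟨q0, by rw [← spoly_ffin p m s lc iotf Xf, hq0]⟩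
  have hDlt : D < p ^ s := by
    rcases lt_or_eq_of_le hDle with h | h
    · exact h
    · exfalso
      obtain ⟨q0, hq0⟩ := hfb
      obtain ⟨dq, hdq, -⟩ := hPfrep q0
      have hffineq : ffin p m s lc = conv theta dq b := by
        apply spoly_injective p m iotf Xf hPfrep
        rw [conv_spec theta iotf Xf hXiotf, ← hdq, ← hq0, spoly_ffin]
      have hdqne : dq ≠ 0 := by
        intro h0
        rw [h0, conv_zero_left] at hffineq
        exact ffin_ne_zero p m s lc hffineq
      have hsupp : dq.support.Nonempty := Finsupp.support_nonempty_iff.mpr hdqne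
      set N := dq.support.max' hsupp with hN
      have hdqN : dq N ≠ 0 := Finsupp.mem_support_iff.mp (dq.support.max'_mem hsupp)
      have hdqhi : ∀ k, N < k → dq k = 0 := by
        intro k hk
        by_contra h0
        exact absurd (dq.support.le_max' k (Finsupp.mem_support_iff.mpr h0)) (by omega)
      have htop : conv theta dq b (N + D) = dq N * (theta ^ N) (b D) :=
        conv_apply_top theta hdqhi hbtop
      rw [hbD, map_one, mul_one] at htop
      rcases Nat.eq_zero_or_pos N with hN0 | hNpos
      · have hdq0 : dq 0 ≠ 0 := by rw [hN0] at hdqN; exact hdqN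
        have hdqsingle : dq = Finsupp.single 0 (dq 0) := by
          ext i
          rcases Nat.eq_zero_or_pos i with rfl | hi
          · rw [Finsupp.single_eq_same]
          · rw [hdqhi i (by omega), Finsupp.single_apply, if_neg (by omega)]
        have hq0c : q0 = iotf (dq 0) := by
          rw [hdq]
          conv_lhs => rw [hdqsingle]
          rw [spoly_single, pow_zero, mul_one]
        have hfP0 : pif (Xf ^ p ^ s - iotf (lc 0)) = 0 :=
          (mem_ker_pif p m s lc iotf Xf pif hkerf _).mpr ⟨1, (one_mul _).symm⟩
        have hpifb : pif (spoly iotf Xf b) = 0 := by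
          have h2 : spoly iotf Xf b = iotf ((dq 0)⁻¹) * (Xf ^ p ^ s - iotf (lc 0)) := by
            rw [hq0, hq0c, ← mul_assoc, ← map_mul, inv_mul_cancel₀ hdq0, map_one, one_mul]
          rw [h2, map_mul, hfP0, mul_zero]
        obtain ⟨y, hy, hyne⟩ := hne
        obtain ⟨g, rfl⟩ := hpif y
        obtain ⟨qg, hqg⟩ := hMb g hy
        apply hyne
        rw [hqg, map_mul, hpifb, mul_zero]
      · have h3 : ffin p m s lc (N + D) = dq N := by rw [hffineq, htop]
        have h0 := ffin_bound p m s lc (N + D) (by omega)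
        rw [h3] at h0
        exact hdqN h0
  have hbbd : ∀ i, p ^ s ≤ i → b i = 0 := fun i hi => hbtop i (by omega)
  refine ⟨b, hbbd, hfb, fun y => ⟨?_, ?_⟩⟩
  · intro hy
    obtain ⟨g, rfl⟩ := hpif y
    obtain ⟨q, hq⟩ := hMb g hy
    exact ⟨pif q, by rw [hq, map_mul]⟩
  · rintro ⟨h, rfl⟩
    exact hsmul h _ hbM

end PfSec
/-! ### The key binomial identity for `w` -/

section WSec

variable (p m s : ℕ) [Fact p.Prime] (theta : Fq p m ≃+* Fq p m) (lc : ℕ → Fq p m)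
variable {Pf : Type*} [Ring Pf] (iotf : Fq p m →+* Pf) (Xf : Pf)

theorem pf_nontrivial (hPfrep : ∀ g : Pf, ∃! c : ℕ →₀ Fq p m, g = spoly iotf Xf c) :
    Nontrivial Pf := by
  by_contra h
  rw [not_nontrivial_iff_subsingleton] at h
  obtain ⟨c0, hc0, huniq⟩ := hPfrep 0
  have h1 : Finsupp.single 0 (1 : Fq p m) = c0 := huniq _ (Subsingleton.elim _ _)
  have h2 : (0 : ℕ →₀ Fq p m) = c0 := huniq _ (Subsingleton.elim _ _)
  have h3 : Finsupp.single 0 (1 : Fq p m) = 0 := h1.trans h2.symm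
  exact one_ne_zero (Finsupp.single_eq_zero.mp h3)

theorem w_eq (hm : 0 < m) (hl0 : lc 0 ≠ 0) (hth0 : theta (lc 0) = lc 0)
    (hXiotf : ∀ a, Xf * iotf a = iotf (theta a) * Xf)
    (hPfrep : ∀ g : Pf, ∃! c : ℕ →₀ Fq p m, g = spoly iotf Xf c) :
    ((iotf ((lc 0 ^ p ^ (m - s % m))⁻¹) * Xf - 1) ^ p ^ s : Pf)
      = iotf ((lc 0)⁻¹) * (Xf ^ p ^ s - iotf (lc 0)) := by
  haveI : Nontrivial Pf := pf_nontrivial p m iotf Xf hPfrep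
  haveI : CharP Pf p := charP_of_injective_ringHom iotf.injective p
  set a : Fq p m := (lc 0 ^ p ^ (m - s % m))⁻¹ with haa
  have htha : theta a = a := by
    rw [haa, map_inv₀, map_pow, hth0]
  have h1 : (iotf a * Xf - 1 : Pf) ^ p ^ s = (iotf a * Xf) ^ p ^ s - 1 ^ p ^ s := by
    exact sub_pow_char_pow_of_commute (x := iotf a * Xf) (y := (1 : Pf)) (p := p) (n := s)
      (Commute.one_right _)
  rw [h1, one_pow, const_mul_X_pow theta iotf Xf hXiotf a htha, haa,
    key_exp p m hm s (lc 0) hl0, mul_sub, ← map_mul, inv_mul_cancel₀ hl0, map_one]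

end WSec
/-! ### Basic structure of the quotient `Q` -/

section QSec

variable (p m t s : ℕ) [Fact p.Prime] (theta : Fq p m ≃+* Fq p m) (lc : ℕ → Fq p m)
variable {P : Type*} [Ring P] (iot : Rt p m t →+* P) (Xp : P)
variable {Q : Type*} [Ring Q] (piQ : P →+* Q)

theorem u_central_P (hXiot : ∀ r, Xp * iot r = iot (Th p m t theta r) * Xp)
    (hPrep : ∀ g : P, ∃! c : ℕ →₀ Rt p m t, g = spoly iot Xp c) (g : P) :
    iot (uE p m t) * g = g * iot (uE p m t) := by
  obtain ⟨r, rfl, -⟩ := hPrep g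
  unfold spoly
  rw [Finsupp.mul_sum, Finsupp.sum_mul]
  refine Finset.sum_congr rfl fun i hi => ?_
  show iot (uE p m t) * (iot (r i) * Xp ^ i) = (iot (r i) * Xp ^ i) * iot (uE p m t)
  rw [mul_assoc, X_pow_iota (Th p m t theta) iot Xp hXiot, Th_pow_u, ← mul_assoc, ← map_mul,
    ← mul_assoc, ← map_mul, mul_comm (uE p m t)]

theorem u_central_Q (hXiot : ∀ r, Xp * iot r = iot (Th p m t theta r) * Xp)
    (hPrep : ∀ g : P, ∃! c : ℕ →₀ Rt p m t, g = spoly iot Xp c)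
    (hpiQ : Function.Surjective piQ) (z : Q) :
    uQ p m t iot piQ * z = z * uQ p m t iot piQ := by
  obtain ⟨g, rfl⟩ := hpiQ z
  unfold uQ
  rw [← map_mul, ← map_mul, u_central_P p m t theta iot Xp hXiot hPrep]

theorem u_pow_central_Q (hXiot : ∀ r, Xp * iot r = iot (Th p m t theta r) * Xp)
    (hPrep : ∀ g : P, ∃! c : ℕ →₀ Rt p m t, g = spoly iot Xp c)
    (hpiQ : Function.Surjective piQ) (e : ℕ) (z : Q) :
    uQ p m t iot piQ ^ e * z = z * uQ p m t iot piQ ^ e := by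
  exact Commute.pow_left (u_central_Q p m t theta iot Xp piQ hXiot hPrep hpiQ z) e

theorem uQ_pow_t : uQ p m t iot piQ ^ t = 0 := by
  unfold uQ
  rw [← map_pow, ← map_pow, uE_pow_t, map_zero, map_zero]

theorem mem_span_uQ (hXiot : ∀ r, Xp * iot r = iot (Th p m t theta r) * Xp)
    (hPrep : ∀ g : P, ∃! c : ℕ →₀ Rt p m t, g = spoly iot Xp c)
    (hpiQ : Function.Surjective piQ) (z : Q) :
    z ∈ Ideal.span {uQ p m t iot piQ} ↔ ∃ q, z = uQ p m t iot piQ * q := by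
  constructor
  · intro h
    obtain ⟨a, ha⟩ := Submodule.mem_span_singleton.mp h
    refine ⟨a, ?_⟩
    rw [← ha, smul_eq_mul, u_central_Q p m t theta iot Xp piQ hXiot hPrep hpiQ]
  · rintro ⟨q, rfl⟩
    refine Submodule.mem_span_singleton.mpr ⟨q, ?_⟩
    rw [smul_eq_mul, u_central_Q p m t theta iot Xp piQ hXiot hPrep hpiQ]

theorem piQ_Xps (hkerQ : RingHom.ker piQ = Ideal.span {Xp ^ p ^ s - iot (lamOf p m t lc)}) :
    piQ (Xp ^ p ^ s) = piQ (iot (lamOf p m t lc)) := by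
  have h : Xp ^ p ^ s - iot (lamOf p m t lc) ∈ RingHom.ker piQ := by
    rw [hkerQ]
    exact Submodule.mem_span_singleton_self _
  have h2 : piQ (Xp ^ p ^ s - iot (lamOf p m t lc)) = 0 := h
  rw [map_sub, sub_eq_zero] at h2
  exact h2

theorem piQ_fP_zero (hkerQ : RingHom.ker piQ = Ideal.span {Xp ^ p ^ s - iot (lamOf p m t lc)}) :
    piQ (Xp ^ p ^ s - iot (lamOf p m t lc)) = 0 := by
  rw [map_sub, sub_eq_zero, piQ_Xps p m t s lc iot Xp piQ hkerQ]

theorem red_mono (hXiot : ∀ r, Xp * iot r = iot (Th p m t theta r) * Xp)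
    (hTlam : Th p m t theta (lamOf p m t lc) = lamOf p m t lc)
    (hkerQ : RingHom.ker piQ = Ideal.span {Xp ^ p ^ s - iot (lamOf p m t lc)})
    (i : ℕ) : ∀ a : Rt p m t, ∃ (j : ℕ) (b : Rt p m t), j < p ^ s ∧
      piQ (iot a * Xp ^ i) = piQ (iot b * Xp ^ j) := by
  induction i using Nat.strong_induction_on with
  | _ i ih =>
    intro a
    by_cases hi : i < p ^ s
    · exact ⟨i, a, hi, rfl⟩
    · push_neg at hi
      have hps : 0 < p ^ s := pow_pos (Fact.out (p := p.Prime)).pos s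
      have hlt : i - p ^ s < i := by omega
      have hstep : piQ (iot a * Xp ^ i)
          = piQ (iot (a * lamOf p m t lc) * Xp ^ (i - p ^ s)) := by
        have h1 : Xp ^ i = Xp ^ (i - p ^ s) * Xp ^ p ^ s := by
          rw [← pow_add]
          congr 1
          omega
        calc piQ (iot a * Xp ^ i)
            = piQ (iot a * Xp ^ (i - p ^ s)) * piQ (Xp ^ p ^ s) := by
              rw [h1, ← mul_assoc, map_mul]
          _ = piQ (iot a * Xp ^ (i - p ^ s)) * piQ (iot (lamOf p m t lc)) := by
              rw [piQ_Xps p m t s lc iot Xp piQ hkerQ]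
          _ = piQ (iot a * (Xp ^ (i - p ^ s) * iot (lamOf p m t lc))) := by
              rw [← map_mul, mul_assoc]
          _ = piQ (iot a * (iot ((Th p m t theta ^ (i - p ^ s)) (lamOf p m t lc))
              * Xp ^ (i - p ^ s))) := by
              rw [X_pow_iota (Th p m t theta) iot Xp hXiot]
          _ = piQ (iot (a * lamOf p m t lc) * Xp ^ (i - p ^ s)) := by
              rw [Th_pow_lam p m t theta lc hTlam, ← mul_assoc, ← map_mul]
      obtain ⟨j, b, hj, hred⟩ := ih (i - p ^ s) hlt (a * lamOf p m t lc)
      exact ⟨j, b, hj, hstep.trans hred⟩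

theorem reduceR (hXiot : ∀ r, Xp * iot r = iot (Th p m t theta r) * Xp)
    (hTlam : Th p m t theta (lamOf p m t lc) = lamOf p m t lc)
    (hkerQ : RingHom.ker piQ = Ideal.span {Xp ^ p ^ s - iot (lamOf p m t lc)})
    (r : ℕ →₀ Rt p m t) : ∃ c : ℕ →₀ Rt p m t, (∀ i, p ^ s ≤ i → c i = 0) ∧
      piQ (spoly iot Xp r) = piQ (spoly iot Xp c) := by
  induction r using Finsupp.induction with
  | zero => exact ⟨0, by simp, rfl⟩
  | single_add i a f hif hane ih =>
      obtain ⟨cf, hcfb, hcf⟩ := ih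
      obtain ⟨j, b, hj, hred⟩ := red_mono p m t s theta lc iot Xp piQ hXiot hTlam hkerQ i a
      refine ⟨Finsupp.single j b + cf, ?_, ?_⟩
      · intro i' hi'
        rw [Finsupp.add_apply, Finsupp.single_apply, if_neg (by omega), hcfb i' hi', add_zero]
      · rw [spoly_add, spoly_add, map_add, map_add, spoly_single, spoly_single, hred, hcf]

theorem decompQ (ht : 0 < t)
    (hXiot : ∀ r, Xp * iot r = iot (Th p m t theta r) * Xp)
    (hPrep : ∀ g : P, ∃! c : ℕ →₀ Rt p m t, g = spoly iot Xp c)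
    (hpiQ : Function.Surjective piQ)
    (hTlam : Th p m t theta (lamOf p m t lc) = lamOf p m t lc)
    (hkerQ : RingHom.ker piQ = Ideal.span {Xp ^ p ^ s - iot (lamOf p m t lc)})
    (z : Q) : ∃ (a : ℕ →₀ Fq p m) (q₂ : Q), (∀ i, p ^ s ≤ i → a i = 0) ∧
      z = lQ p m t iot Xp piQ a + uQ p m t iot piQ * q₂ := by
  obtain ⟨g, rfl⟩ := hpiQ z
  obtain ⟨r, rfl, -⟩ := hPrep g
  obtain ⟨c, hcb, hc⟩ := reduceR p m t s theta lc iot Xp piQ hXiot hTlam hkerQ r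
  set a := c.mapRange (rdc p m t ht) (map_zero _) with hadef
  set d := c.mapRange (dvu p m t ht) (dvu_zero p m t ht) with hddef
  have hkey : spoly iot Xp c = liftP p m t iot Xp a + iot (uE p m t) * spoly iot Xp d := by
    rw [liftP_as_spoly, hadef, hddef]
    unfold spoly
    rw [Finsupp.sum_mapRange_index (by simp), Finsupp.sum_mapRange_index (by simp),
      Finsupp.mul_sum, ← Finsupp.sum_add]
    refine Finset.sum_congr rfl fun i hi => ?_
    show iot (c i) * Xp ^ i = iot (eps p m t (rdc p m t ht (c i))) * Xp ^ i
      + iot (uE p m t) * (iot (dvu p m t ht (c i)) * Xp ^ i)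
    rw [← mul_assoc, ← map_mul, ← add_mul, ← map_add, ← dvu_spec]
  refine ⟨a, piQ (spoly iot Xp d), ?_, ?_⟩
  · intro i hi
    rw [hadef, Finsupp.mapRange_apply, hcb i hi, map_zero]
  · rw [hc, hkey, map_add, map_mul]
    rfl

end QSec
/-! ### The level sets of a left ideal of `Q` -/

/-- The coefficient family of `x^{p^s} - λ` over `R^t`. -/
noncomputable def flam (p m t s : ℕ) [Fact p.Prime] (lc : ℕ → Fq p m) : ℕ →₀ Rt p m t :=
  Finsupp.single (p ^ s) 1 - Finsupp.single 0 (lamOf p m t lc)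

section QSec2

variable (p m t s : ℕ) [Fact p.Prime] (theta : Fq p m ≃+* Fq p m) (lc : ℕ → Fq p m)
variable {P : Type*} [Ring P] (iot : Rt p m t →+* P) (Xp : P)
variable {Q : Type*} [Ring Q] (piQ : P →+* Q)
variable {Pf : Type*} [Ring Pf] (iotf : Fq p m →+* Pf) (Xf : Pf)
variable {Qf : Type*} [Ring Qf] (pif : Pf →+* Qf)

theorem spoly_flam : spoly iot Xp (flam p m t s lc) = Xp ^ p ^ s - iot (lamOf p m t lc) :=
  spoly_pair iot Xp _ _

theorem rdc_flam (ht : 0 < t) (y : ℕ) :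
    rdc p m t ht (flam p m t s lc y) = ffin p m s lc y := by
  unfold flam ffin
  rw [Finsupp.sub_apply, Finsupp.sub_apply, map_sub, Finsupp.single_apply,
    Finsupp.single_apply, Finsupp.single_apply, Finsupp.single_apply,
    apply_ite (rdc p m t ht), apply_ite (rdc p m t ht), map_one, map_zero, rdc_lam]

/-- Injectivity of reduced representatives modulo `u` in `Q`. -/
theorem lemA (ht : 0 < t)
    (hXiot : ∀ r, Xp * iot r = iot (Th p m t theta r) * Xp)
    (hPrep : ∀ g : P, ∃! c : ℕ →₀ Rt p m t, g = spoly iot Xp c)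
    (hpiQ : Function.Surjective piQ)
    (hkerQ : RingHom.ker piQ = Ideal.span {Xp ^ p ^ s - iot (lamOf p m t lc)})
    (c : ℕ →₀ Fq p m) (hb : ∀ i, p ^ s ≤ i → c i = 0)
    (h : ∃ q : Q, lQ p m t iot Xp piQ c = uQ p m t iot piQ * q) : c = 0 := by
  obtain ⟨q, hq⟩ := h
  obtain ⟨g, rfl⟩ := hpiQ q
  obtain ⟨r, rfl, -⟩ := hPrep g
  have h1 : iot (uE p m t) * spoly iot Xp r
      = spoly iot Xp (r.mapRange (fun x => uE p m t * x) (by simp)) := by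
    rw [spoly_scale iot Xp (uE p m t) r]
  have h2 : piQ (liftP p m t iot Xp c
      - spoly iot Xp (r.mapRange (fun x => uE p m t * x) (by simp))) = 0 := by
    rw [map_sub, ← h1, map_mul]
    exact sub_eq_zero.mpr hq
  rw [← RingHom.mem_ker, hkerQ] at h2
  obtain ⟨hp, hhp⟩ := Submodule.mem_span_singleton.mp h2
  obtain ⟨dR, hdR, -⟩ := hPrep hp
  rw [smul_eq_mul, hdR, ← spoly_flam p m t s lc iot Xp,
    ← conv_spec (Th p m t theta) iot Xp hXiot] at hhp
  -- liftP c = conv + u·r as coefficient families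
  have h3 : liftP p m t iot Xp c = spoly iot Xp
      (conv (Th p m t theta) dR (flam p m t s lc)
        + r.mapRange (fun x => uE p m t * x) (by simp)) := by
    rw [spoly_add, hhp]
    abel
  rw [liftP_mapRange] at h3
  have h4 : c.mapRange (eps p m t) (map_zero _)
      = conv (Th p m t theta) dR (flam p m t s lc)
        + r.mapRange (fun x => uE p m t * x) (by simp) :=
    spoly_inj iot Xp hPrep h3
  set dbar := dR.mapRange (rdc p m t ht) (map_zero _) with hdbar
  have hpoint : ∀ x, c x = conv theta dbar (ffin p m s lc) x := by
    intro x
    have hx := DFunLike.congr_fun h4 x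
    rw [Finsupp.mapRange_apply, Finsupp.add_apply, Finsupp.mapRange_apply] at hx
    have hx2 := congrArg (rdc p m t ht) hx
    rw [rdc_eps, map_add, map_mul, rdc_u, zero_mul, add_zero] at hx2
    rw [hx2]
    rw [conv_apply, conv_apply, hdbar, Finsupp.sum_mapRange_index (by intro i; split <;> simp)]
    rw [map_finsuppSum]
    refine Finset.sum_congr rfl fun i hi => ?_
    show rdc p m t ht (if i ≤ x then dR i * (Th p m t theta ^ i) (flam p m t s lc (x - i)) else 0)
      = if i ≤ x then rdc p m t ht (dR i) * (theta ^ i) (ffin p m s lc (x - i)) else 0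
    rw [apply_ite (rdc p m t ht), map_zero, map_mul, rdc_Th_pow, rdc_flam]
  have hceq : c = conv theta dbar (ffin p m s lc) := Finsupp.ext hpoint
  exact (core_conv_zero p m s theta lc dbar c hceq hb).1

/-- Kernel elements of the residue quotient lift to multiples of `u` in `Q`. -/
theorem ker_red (ht : 0 < t)
    (hXiot : ∀ r, Xp * iot r = iot (Th p m t theta r) * Xp)
    (hXiotf : ∀ a, Xf * iotf a = iotf (theta a) * Xf)
    (hPrep : ∀ g : P, ∃! c : ℕ →₀ Rt p m t, g = spoly iot Xp c)
    (hPfrep : ∀ g : Pf, ∃! c : ℕ →₀ Fq p m, g = spoly iotf Xf c)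
    (hpiQ : Function.Surjective piQ)
    (hkerQ : RingHom.ker piQ = Ideal.span {Xp ^ p ^ s - iot (lamOf p m t lc)})
    (hkerf : RingHom.ker pif = Ideal.span {Xf ^ p ^ s - iotf (lc 0)})
    (d : ℕ →₀ Fq p m) (h : pif (spoly iotf Xf d) = 0) :
    ∃ q : Q, lQ p m t iot Xp piQ d = uQ p m t iot piQ * q := by
  obtain ⟨hq, hhq⟩ := (mem_ker_pif p m s lc iotf Xf pif hkerf _).mp h
  obtain ⟨dq, hdq, -⟩ := hPfrep hq
  have hd : d = conv theta dq (ffin p m s lc) := by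
    apply spoly_injective p m iotf Xf hPfrep
    rw [conv_spec theta iotf Xf hXiotf, ← hdq, spoly_ffin p m s lc iotf Xf, ← hhq]
  have h1 : lQ p m t iot Xp piQ d
      = piQ (liftP p m t iot Xp dq) * piQ (liftP p m t iot Xp (ffin p m s lc)) := by
    unfold lQ
    rw [hd, liftP_conv p m t theta iot Xp hXiot, map_mul]
  have h2 : liftP p m t iot Xp (ffin p m s lc) = Xp ^ p ^ s - iot (eps p m t (lc 0)) := by
    rw [liftP_as_spoly]
    exact spoly_pair _ Xp _ _
  have h4 : Xp ^ p ^ s - iot (eps p m t (lc 0))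
      = (Xp ^ p ^ s - iot (lamOf p m t lc))
        + iot (uE p m t * dvu p m t ht (lamOf p m t lc)) := by
    have h5 : uE p m t * dvu p m t ht (lamOf p m t lc)
        = lamOf p m t lc - eps p m t (lc 0) :=
      eq_sub_of_add_eq' (lam_decomp p m t lc ht).symm
    rw [h5, map_sub]
    abel
  have h3 : piQ (liftP p m t iot Xp (ffin p m s lc))
      = uQ p m t iot piQ * piQ (iot (dvu p m t ht (lamOf p m t lc))) := by
    rw [h2, h4, map_add, piQ_fP_zero p m t s lc iot Xp piQ hkerQ, zero_add, map_mul, map_mul]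
    rfl
  refine ⟨piQ (liftP p m t iot Xp dq) * piQ (iot (dvu p m t ht (lamOf p m t lc))), ?_⟩
  rw [h1, h3, ← mul_assoc, ← u_central_Q p m t theta iot Xp piQ hXiot hPrep hpiQ, mul_assoc]

end QSec2

/-- Leading-coefficient membership at level `e`. -/
def LeMem (p m t : ℕ) [Fact p.Prime] {P Q : Type*} [Ring P] [Ring Q]
    (iot : Rt p m t →+* P) (Xp : P) (piQ : P →+* Q) (J : Ideal Q) (e : ℕ)
    (c : ℕ →₀ Fq p m) : Prop :=
  ∃ j ∈ J, ∃ q : Q,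
    uQ p m t iot piQ ^ e * lQ p m t iot Xp piQ c = j + uQ p m t iot piQ ^ (e + 1) * q

/-- The level-`e` reduction of a left ideal `J ≤ Q`, as a subset of `Qf`. -/
def Lset (p m t : ℕ) [Fact p.Prime] {P Q Pf Qf : Type*} [Ring P] [Ring Q] [Ring Pf] [Ring Qf]
    (iot : Rt p m t →+* P) (Xp : P) (piQ : P →+* Q)
    (iotf : Fq p m →+* Pf) (Xf : Pf) (pif : Pf →+* Qf) (J : Ideal Q) (e : ℕ) : Set Qf :=
  {y | ∃ c : ℕ →₀ Fq p m, y = lQf p m iotf Xf pif c ∧ LeMem p m t iot Xp piQ J e c}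
/-! ### Level machinery and the main spanning argument -/

section LSec

variable (p m t s : ℕ) [Fact p.Prime] (theta : Fq p m ≃+* Fq p m) (lc : ℕ → Fq p m)
variable {P : Type*} [Ring P] (iot : Rt p m t →+* P) (Xp : P)
variable {Q : Type*} [Ring Q] (piQ : P →+* Q)
variable {Pf : Type*} [Ring Pf] (iotf : Fq p m →+* Pf) (Xf : Pf)
variable {Qf : Type*} [Ring Qf] (pif : Pf →+* Qf)

theorem lQ_zero : lQ p m t iot Xp piQ 0 = 0 := by
  unfold lQ liftP
  rw [Finsupp.sum_zero_index, map_zero]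

theorem lQ_add (c d : ℕ →₀ Fq p m) :
    lQ p m t iot Xp piQ (c + d) = lQ p m t iot Xp piQ c + lQ p m t iot Xp piQ d := by
  unfold lQ
  rw [liftP_as_spoly, liftP_as_spoly, liftP_as_spoly, spoly_add, map_add]

theorem lQ_conv (hXiot : ∀ r, Xp * iot r = iot (Th p m t theta r) * Xp)
    (h c : ℕ →₀ Fq p m) :
    lQ p m t iot Xp piQ (conv theta h c) = lQ p m t iot Xp piQ h * lQ p m t iot Xp piQ c := by
  unfold lQ
  rw [liftP_conv p m t theta iot Xp hXiot, map_mul]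

theorem lQf_add (c d : ℕ →₀ Fq p m) :
    lQf p m iotf Xf pif (c + d) = lQf p m iotf Xf pif c + lQf p m iotf Xf pif d := by
  unfold lQf
  rw [spoly_add, map_add]

theorem lQf_conv (hXiotf : ∀ a, Xf * iotf a = iotf (theta a) * Xf) (h c : ℕ →₀ Fq p m) :
    lQf p m iotf Xf pif (conv theta h c)
      = lQf p m iotf Xf pif h * lQf p m iotf Xf pif c := by
  unfold lQf
  rw [conv_spec theta iotf Xf hXiotf, map_mul]

theorem LeMem_zero (J : Ideal Q) (e : ℕ) : LeMem p m t iot Xp piQ J e 0 :=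
  ⟨0, J.zero_mem, 0, by rw [lQ_zero, mul_zero, mul_zero, add_zero]⟩

theorem LeMem_add (J : Ideal Q) (e : ℕ) {c c' : ℕ →₀ Fq p m}
    (h : LeMem p m t iot Xp piQ J e c) (h' : LeMem p m t iot Xp piQ J e c') :
    LeMem p m t iot Xp piQ J e (c + c') := by
  obtain ⟨j, hj, q, heq⟩ := h
  obtain ⟨j', hj', q', heq'⟩ := h'
  refine ⟨j + j', J.add_mem hj hj', q + q', ?_⟩
  rw [lQ_add, mul_add, heq, heq', mul_add]
  abel

theorem LeMem_smul (hXiot : ∀ r, Xp * iot r = iot (Th p m t theta r) * Xp)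
    (hPrep : ∀ g : P, ∃! c : ℕ →₀ Rt p m t, g = spoly iot Xp c)
    (hpiQ : Function.Surjective piQ)
    (J : Ideal Q) (e : ℕ) (h : ℕ →₀ Fq p m) {c : ℕ →₀ Fq p m}
    (hc : LeMem p m t iot Xp piQ J e c) :
    LeMem p m t iot Xp piQ J e (conv theta h c) := by
  obtain ⟨j, hj, q, heq⟩ := hc
  refine ⟨lQ p m t iot Xp piQ h * j, J.mul_mem_left _ hj, lQ p m t iot Xp piQ h * q, ?_⟩
  rw [lQ_conv p m t theta iot Xp piQ hXiot]
  calc uQ p m t iot piQ ^ e * (lQ p m t iot Xp piQ h * lQ p m t iot Xp piQ c)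
      = (uQ p m t iot piQ ^ e * lQ p m t iot Xp piQ h) * lQ p m t iot Xp piQ c := by
        rw [mul_assoc]
    _ = (lQ p m t iot Xp piQ h * uQ p m t iot piQ ^ e) * lQ p m t iot Xp piQ c := by
        rw [u_pow_central_Q p m t theta iot Xp piQ hXiot hPrep hpiQ]
    _ = lQ p m t iot Xp piQ h * (uQ p m t iot piQ ^ e * lQ p m t iot Xp piQ c) := by
        rw [mul_assoc]
    _ = lQ p m t iot Xp piQ h * (j + uQ p m t iot piQ ^ (e + 1) * q) := by rw [heq]
    _ = lQ p m t iot Xp piQ h * j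
        + (lQ p m t iot Xp piQ h * uQ p m t iot piQ ^ (e + 1)) * q := by
        rw [mul_add, mul_assoc]
    _ = lQ p m t iot Xp piQ h * j
        + uQ p m t iot piQ ^ (e + 1) * (lQ p m t iot Xp piQ h * q) := by
        rw [← u_pow_central_Q p m t theta iot Xp piQ hXiot hPrep hpiQ, mul_assoc]

theorem LeMem_mono (J : Ideal Q) (e : ℕ) {c : ℕ →₀ Fq p m}
    (hc : LeMem p m t iot Xp piQ J e c) : LeMem p m t iot Xp piQ J (e + 1) c := by
  obtain ⟨j, hj, q, heq⟩ := hc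
  refine ⟨uQ p m t iot piQ * j, J.mul_mem_left _ hj, q, ?_⟩
  calc uQ p m t iot piQ ^ (e + 1) * lQ p m t iot Xp piQ c
      = uQ p m t iot piQ * (uQ p m t iot piQ ^ e * lQ p m t iot Xp piQ c) := by
        rw [← mul_assoc, ← pow_succ']
    _ = uQ p m t iot piQ * j + uQ p m t iot piQ * (uQ p m t iot piQ ^ (e + 1) * q) := by
        rw [heq, mul_add]
    _ = uQ p m t iot piQ * j + uQ p m t iot piQ ^ (e + 1 + 1) * q := by
        rw [← mul_assoc, ← pow_succ']

theorem LeMem_congr (ht : 0 < t)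
    (hXiot : ∀ r, Xp * iot r = iot (Th p m t theta r) * Xp)
    (hXiotf : ∀ a, Xf * iotf a = iotf (theta a) * Xf)
    (hPrep : ∀ g : P, ∃! c : ℕ →₀ Rt p m t, g = spoly iot Xp c)
    (hPfrep : ∀ g : Pf, ∃! c : ℕ →₀ Fq p m, g = spoly iotf Xf c)
    (hpiQ : Function.Surjective piQ)
    (hkerQ : RingHom.ker piQ = Ideal.span {Xp ^ p ^ s - iot (lamOf p m t lc)})
    (hkerf : RingHom.ker pif = Ideal.span {Xf ^ p ^ s - iotf (lc 0)})
    (J : Ideal Q) (e : ℕ) {c c' : ℕ →₀ Fq p m}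
    (hcc : lQf p m iotf Xf pif c = lQf p m iotf Xf pif c')
    (hc : LeMem p m t iot Xp piQ J e c) : LeMem p m t iot Xp piQ J e c' := by
  obtain ⟨j, hj, q, heq⟩ := hc
  have hδ0 : pif (spoly iotf Xf (c' - c)) = 0 := by
    rw [spoly_sub, map_sub, sub_eq_zero]
    exact hcc.symm
  obtain ⟨qδ, hqδ⟩ := ker_red p m t s theta lc iot Xp piQ iotf Xf pif ht hXiot hXiotf hPrep
    hPfrep hpiQ hkerQ hkerf _ hδ0
  refine ⟨j, hj, q + qδ, ?_⟩
  have h7 : c' = c + (c' - c) := by abel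
  calc uQ p m t iot piQ ^ e * lQ p m t iot Xp piQ c'
      = uQ p m t iot piQ ^ e * lQ p m t iot Xp piQ c
        + uQ p m t iot piQ ^ e * (uQ p m t iot piQ * qδ) := by
        rw [← hqδ, ← mul_add, ← lQ_add, ← h7]
    _ = (j + uQ p m t iot piQ ^ (e + 1) * q) + uQ p m t iot piQ ^ (e + 1) * qδ := by
        rw [heq, ← mul_assoc, ← pow_succ]
    _ = j + uQ p m t iot piQ ^ (e + 1) * (q + qδ) := by
        rw [mul_add]
        abel

/-- The main downward induction: every element of `J` lies in the span of the generators. -/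
theorem main_span (ht : 0 < t)
    (hXiot : ∀ r, Xp * iot r = iot (Th p m t theta r) * Xp)
    (hXiotf : ∀ a, Xf * iotf a = iotf (theta a) * Xf)
    (hPrep : ∀ g : P, ∃! c : ℕ →₀ Rt p m t, g = spoly iot Xp c)
    (hPfrep : ∀ g : Pf, ∃! c : ℕ →₀ Fq p m, g = spoly iotf Xf c)
    (hpiQ : Function.Surjective piQ)
    (hkerQ : RingHom.ker piQ = Ideal.span {Xp ^ p ^ s - iot (lamOf p m t lc)})
    (hkerf : RingHom.ker pif = Ideal.span {Xf ^ p ^ s - iotf (lc 0)})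
    (hTlam : Th p m t theta (lamOf p m t lc) = lamOf p m t lc)
    (J : Ideal Q) (G : Set Q) (hG : ∀ z ∈ G, z ∈ J)
    (hcover : ∀ e, e < t → ∀ c : ℕ →₀ Fq p m, (∀ i, p ^ s ≤ i → c i = 0) →
      LeMem p m t iot Xp piQ J e c → c ≠ 0 →
      ∃ (b : ℕ →₀ Fq p m) (g : Q),
        (uQ p m t iot piQ ^ e * lQ p m t iot Xp piQ b
          + uQ p m t iot piQ ^ (e + 1) * g) ∈ G ∧
        ∃ h : ℕ →₀ Fq p m,
          lQf p m iotf Xf pif c = lQf p m iotf Xf pif (conv theta h b)) :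
    ∀ d : ℕ, ∀ z ∈ J, (∃ q : Q, z = uQ p m t iot piQ ^ (t - d) * q) →
      z ∈ Submodule.span Q G := by
  intro d
  induction d with
  | zero =>
      rintro z hz ⟨q, rfl⟩
      rw [Nat.sub_zero, uQ_pow_t, zero_mul]
      exact Submodule.zero_mem _
  | succ d ih =>
      rintro z hz ⟨q, rfl⟩
      by_cases hdt : t ≤ d
      · refine ih _ hz ⟨q, ?_⟩
        rw [show t - (d + 1) = t - d by omega]
      · push_neg at hdt
        set e := t - (d + 1) with he
        have hed : t - d = e + 1 := by omega
        have het : e < t := by omega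
        obtain ⟨a, q₂, hab, hq₂⟩ :=
          decompQ p m t s theta lc iot Xp piQ ht hXiot hPrep hpiQ hTlam hkerQ q
        have hzdec : uQ p m t iot piQ ^ e * q
            = uQ p m t iot piQ ^ e * lQ p m t iot Xp piQ a
              + uQ p m t iot piQ ^ (e + 1) * q₂ := by
          rw [hq₂, mul_add, ← mul_assoc, ← pow_succ]
        have hLe : LeMem p m t iot Xp piQ J e a := by
          refine ⟨uQ p m t iot piQ ^ e * q, hz, -q₂, ?_⟩
          rw [hzdec, mul_neg]
          abel
        by_cases ha0 : a = 0
        · refine ih _ hz ⟨q₂, ?_⟩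
          rw [hed, hq₂, ha0, lQ_zero, zero_add, ← mul_assoc, ← pow_succ]
        · obtain ⟨b, g, hbG, hfin, hconv⟩ := hcover e het a hab hLe ha0
          have hδ0 : pif (spoly iotf Xf (a - conv theta hfin b)) = 0 := by
            rw [spoly_sub, map_sub, sub_eq_zero]
            exact hconv
          obtain ⟨qδ, hqδ⟩ := ker_red p m t s theta lc iot Xp piQ iotf Xf pif ht hXiot
            hXiotf hPrep hPfrep hpiQ hkerQ hkerf _ hδ0
          have hlQa : lQ p m t iot Xp piQ a
              = lQ p m t iot Xp piQ hfin * lQ p m t iot Xp piQ b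
                + uQ p m t iot piQ * qδ := by
            have h7 : a = conv theta hfin b + (a - conv theta hfin b) := by abel
            calc lQ p m t iot Xp piQ a
                = lQ p m t iot Xp piQ (conv theta hfin b + (a - conv theta hfin b)) := by
                  rw [← h7]
              _ = lQ p m t iot Xp piQ (conv theta hfin b)
                  + lQ p m t iot Xp piQ (a - conv theta hfin b) := lQ_add p m t iot Xp piQ _ _
              _ = lQ p m t iot Xp piQ hfin * lQ p m t iot Xp piQ b
                  + uQ p m t iot piQ * qδ := by
                  rw [lQ_conv p m t theta iot Xp piQ hXiot, hqδ]
          set H := lQ p m t iot Xp piQ hfin with hH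
          set B := lQ p m t iot Xp piQ b with hB
          set u1 := uQ p m t iot piQ with hu1
          set zG := u1 ^ e * B + u1 ^ (e + 1) * g with hzG
          have hcent : ∀ (k : ℕ) (y w : Q), y * (u1 ^ k * w) = u1 ^ k * (y * w) := by
            intro k y w
            rw [← mul_assoc, ← u_pow_central_Q p m t theta iot Xp piQ hXiot hPrep hpiQ,
              mul_assoc]
          have h9 : u1 ^ e * lQ p m t iot Xp piQ a
              = u1 ^ e * (H * B) + u1 ^ (e + 1) * qδ := by
            rw [hlQa, mul_add]
            congr 1
            rw [← mul_assoc, ← pow_succ]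
          have h10 : H * zG = u1 ^ e * (H * B) + u1 ^ (e + 1) * (H * g) := by
            rw [hzG, mul_add, hcent e H B, hcent (e + 1) H g]
          have hz3 : u1 ^ e * q = H * zG + u1 ^ (e + 1) * (qδ + q₂ - H * g) := by
            rw [hzdec, h9, h10, mul_sub, mul_add]
            abel
          have hJ3 : u1 ^ (e + 1) * (qδ + q₂ - H * g) ∈ J := by
            have h8 : u1 ^ (e + 1) * (qδ + q₂ - H * g) = u1 ^ e * q - H * zG := by
              rw [hz3]
              abel
            rw [h8]
            exact Submodule.sub_mem _ hz (J.mul_mem_left _ (hG _ hbG))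
          have hspan3 := ih _ hJ3 ⟨qδ + q₂ - H * g, by rw [hed]⟩
          rw [hz3]
          exact Submodule.add_mem _
            (Submodule.smul_mem _ H (Submodule.subset_span hbG)) hspan3

/-- If `J ≠ ⊥` then some level has a nonzero reduced leading coefficient. -/
theorem exists_level (ht : 0 < t)
    (hXiot : ∀ r, Xp * iot r = iot (Th p m t theta r) * Xp)
    (hPrep : ∀ g : P, ∃! c : ℕ →₀ Rt p m t, g = spoly iot Xp c)
    (hpiQ : Function.Surjective piQ)
    (hkerQ : RingHom.ker piQ = Ideal.span {Xp ^ p ^ s - iot (lamOf p m t lc)})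
    (hTlam : Th p m t theta (lamOf p m t lc) = lamOf p m t lc)
    (J : Ideal Q) (hJ : J ≠ ⊥) :
    ∃ e, e < t ∧ ∃ c : ℕ →₀ Fq p m, (∀ i, p ^ s ≤ i → c i = 0) ∧ c ≠ 0 ∧
      LeMem p m t iot Xp piQ J e c := by
  obtain ⟨z0, hz0, hz0ne⟩ := Submodule.exists_mem_ne_zero_of_ne_bot hJ
  suffices h : ∀ d : ℕ, ∀ z ∈ J, z ≠ 0 → (∃ q : Q, z = uQ p m t iot piQ ^ (t - d) * q) →
      ∃ e, e < t ∧ ∃ c : ℕ →₀ Fq p m, (∀ i, p ^ s ≤ i → c i = 0) ∧ c ≠ 0 ∧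
        LeMem p m t iot Xp piQ J e c by
    exact h t z0 hz0 hz0ne ⟨z0, by rw [Nat.sub_self, pow_zero, one_mul]⟩
  intro d
  induction d with
  | zero =>
      rintro z hz hzne ⟨q, rfl⟩
      rw [Nat.sub_zero, uQ_pow_t, zero_mul] at hzne
      exact absurd rfl hzne
  | succ d ih =>
      rintro z hz hzne ⟨q, rfl⟩
      by_cases hdt : t ≤ d
      · refine ih _ hz hzne ⟨q, ?_⟩
        rw [show t - (d + 1) = t - d by omega]
      · push_neg at hdt
        set e := t - (d + 1) with he
        have hed : t - d = e + 1 := by omega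
        have het : e < t := by omega
        obtain ⟨a, q₂, hab, hq₂⟩ :=
          decompQ p m t s theta lc iot Xp piQ ht hXiot hPrep hpiQ hTlam hkerQ q
        have hzdec : uQ p m t iot piQ ^ e * q
            = uQ p m t iot piQ ^ e * lQ p m t iot Xp piQ a
              + uQ p m t iot piQ ^ (e + 1) * q₂ := by
          rw [hq₂, mul_add, ← mul_assoc, ← pow_succ]
        by_cases ha0 : a = 0
        · refine ih _ hz hzne ⟨q₂, ?_⟩
          rw [hed, hq₂, ha0, lQ_zero, zero_add, ← mul_assoc, ← pow_succ]
        · refine ⟨e, het, a, hab, ha0, ?_⟩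
          refine ⟨uQ p m t iot piQ ^ e * q, hz, -q₂, ?_⟩
          rw [hzdec, mul_neg]
          abel

end LSec
/-- Classification of the left ideals of `R^{t,x^{p^s}-λ}_Θ`. -/
theorem statement7 (p m t s : ℕ) [Fact p.Prime] (hm : 0 < m) (ht : 0 < t) (hs : 0 < s)
    (theta : Fq p m ≃+* Fq p m)
    (lc : ℕ → Fq p m) (hl0 : lc 0 ≠ 0)
    (hTlam : Th p m t theta (lamOf p m t lc) = lamOf p m t lc)
    (hord : thOrder p m t theta ∣ p ^ s)
    {P : Type*} [Ring P] (iot : Rt p m t →+* P) (Xp : P)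
    (hXiot : ∀ r, Xp * iot r = iot (Th p m t theta r) * Xp)
    (hPrep : ∀ g : P, ∃! c : ℕ →₀ Rt p m t, g = spoly iot Xp c)
    {Pf : Type*} [Ring Pf] (iotf : Fq p m →+* Pf) (Xf : Pf)
    (hXiotf : ∀ a, Xf * iotf a = iotf (theta a) * Xf)
    (hPfrep : ∀ g : Pf, ∃! c : ℕ →₀ Fq p m, g = spoly iotf Xf c)
    {Q : Type*} [Ring Q] (piQ : P →+* Q) (hpiQ : Function.Surjective piQ)
    (hkerQ : RingHom.ker piQ = Ideal.span {Xp ^ p ^ s - iot (lamOf p m t lc)})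
    {Qf : Type*} [Ring Qf] (pif : Pf →+* Qf) (hpif : Function.Surjective pif)
    (hkerf : RingHom.ker pif = Ideal.span {Xf ^ p ^ s - iotf (lc 0)})
    :
    ∀ J : Ideal Q,
      J = ⊥ ∨ J = ⊤ ∨
      (J ≠ ⊥ ∧ J ≤ Ideal.span {uQ p m t iot piQ} ∧
        TypeTwo p m t iot Xp piQ iotf Xf pif ((iotf ((lc 0 ^ p ^ (m - s % m))⁻¹) * Xf - 1) ^ p ^ s) (p ^ s) J) ∨
      (J ≠ ⊤ ∧ ¬J ≤ Ideal.span {uQ p m t iot piQ} ∧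
        ∃ (bc : ℕ →₀ Fq p m) (g : Q) (I : Ideal Q),
          InB p m iotf Xf ((iotf ((lc 0 ^ p ^ (m - s % m))⁻¹) * Xf - 1) ^ p ^ s) (p ^ s) bc ∧
          TypeTwo p m t iot Xp piQ iotf Xf pif ((iotf ((lc 0 ^ p ^ (m - s % m))⁻¹) * Xf - 1) ^ p ^ s) (p ^ s) I ∧
          J = Submodule.span Q {lQ p m t iot Xp piQ bc + uQ p m t iot piQ * g} ⊔ I) := by
  classical
  intro J
  -- the fixed residue of θ and the identity for w
  have hθ0 : theta (lc 0) = lc 0 := theta_lc0 p m t theta lc ht hTlam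
  have hW : ((iotf ((lc 0 ^ p ^ (m - s % m))⁻¹) * Xf - 1) ^ p ^ s : Pf)
      = iotf ((lc 0)⁻¹) * (Xf ^ p ^ s - iotf (lc 0)) :=
    w_eq p m s theta lc iotf Xf hm hl0 hθ0 hXiotf hPfrep
  have hInB : ∀ b : ℕ →₀ Fq p m, (∀ i, p ^ s ≤ i → b i = 0) →
      (∃ hq : Pf, Xf ^ p ^ s - iotf (lc 0) = hq * spoly iotf Xf b) →
      InB p m iotf Xf ((iotf ((lc 0 ^ p ^ (m - s % m))⁻¹) * Xf - 1) ^ p ^ s) (p ^ s) b := by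
    rintro b h1 ⟨hq, h2⟩
    exact ⟨h1, ⟨iotf ((lc 0)⁻¹) * hq, by rw [hW, h2, mul_assoc]⟩⟩
  by_cases hJb : J = ⊥
  · exact Or.inl hJb
  -- J ≠ ⊥ from here on: set up the level data
  have hEex : ∃ e, ∃ c : ℕ →₀ Fq p m, (∀ i, p ^ s ≤ i → c i = 0) ∧ c ≠ 0 ∧
      LeMem p m t iot Xp piQ J e c := by
    obtain ⟨e, _, hc⟩ := exists_level p m t s theta lc iot Xp piQ ht hXiot hPrep
      hpiQ hkerQ hTlam J hJb
    exact ⟨e, hc⟩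
  set E : ℕ → Prop := fun e => ∃ c : ℕ →₀ Fq p m, (∀ i, p ^ s ≤ i → c i = 0) ∧ c ≠ 0 ∧
      LeMem p m t iot Xp piQ J e c with hE
  set e₀ := Nat.find hEex with he₀
  have hEmono : ∀ e, E e → E (e + 1) := by
    rintro e ⟨c, h1, h2, h3⟩
    exact ⟨c, h1, h2, LeMem_mono p m t iot Xp piQ J e h3⟩
  have hEall : ∀ e, e₀ ≤ e → E e := by
    intro e he
    induction e with
    | zero =>
        have : e₀ = 0 := by omega
        rw [← this]
        exact Nat.find_spec hEex
    | succ k ih =>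
        rcases Nat.lt_or_ge k e₀ with h | h
        · have : e₀ = k + 1 := by omega
          rw [← this]
          exact Nat.find_spec hEex
        · exact hEmono k (ih h)
  have hE0lt : e₀ < t := by
    obtain ⟨e, helt, hc⟩ := exists_level p m t s theta lc iot Xp piQ ht hXiot hPrep
      hpiQ hkerQ hTlam J hJb
    have := Nat.find_min' hEex hc
    omega
  have hnotE : ∀ e, e < e₀ → ¬ E e := fun e he => Nat.find_min hEex he
  -- level data via classification
  have hdata : ∀ e : ℕ, ∃ (b : ℕ →₀ Fq p m) (g : Q), e₀ ≤ e → e < t →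
      ((∀ i, p ^ s ≤ i → b i = 0) ∧
       (∃ hq : Pf, Xf ^ p ^ s - iotf (lc 0) = hq * spoly iotf Xf b) ∧
       (uQ p m t iot piQ ^ e * lQ p m t iot Xp piQ b
          - uQ p m t iot piQ ^ (e + 1) * g) ∈ J ∧
       (∀ c : ℕ →₀ Fq p m, LeMem p m t iot Xp piQ J e c →
          ∃ hh : Qf, lQf p m iotf Xf pif c = hh * lQf p m iotf Xf pif b)) := by
    intro e
    by_cases hgood : e₀ ≤ e ∧ e < t
    · set L := Lset p m t iot Xp piQ iotf Xf pif J e with hL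
      have hadd : ∀ y ∈ L, ∀ z ∈ L, y + z ∈ L := by
        rintro y ⟨c1, rfl, l1⟩ z ⟨c2, rfl, l2⟩
        exact ⟨c1 + c2, (lQf_add p m iotf Xf pif c1 c2).symm,
          LeMem_add p m t iot Xp piQ J e l1 l2⟩
      have hsmul : ∀ (qf : Qf), ∀ y ∈ L, qf * y ∈ L := by
        rintro qf y ⟨c1, rfl, l1⟩
        obtain ⟨gq, rfl⟩ := hpif qf
        obtain ⟨hq2, hgq, -⟩ := hPfrep gq
        refine ⟨conv theta hq2 c1, ?_, LeMem_smul p m t theta iot Xp piQ hXiot hPrep hpiQ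
          J e hq2 l1⟩
        rw [lQf_conv p m theta iotf Xf pif hXiotf,
          show lQf p m iotf Xf pif hq2 = pif gq from by rw [hgq]; rfl]
      have hneL : ∃ y ∈ L, y ≠ 0 := by
        obtain ⟨c, hb, hcne, hLe⟩ := hEall e hgood.1
        refine ⟨lQf p m iotf Xf pif c, ⟨c, rfl, hLe⟩, fun h0 => hcne ?_⟩
        exact lQf_eq_zero p m s theta lc iotf Xf pif hXiotf hPfrep hkerf c hb h0
      obtain ⟨b, hbbd, hbdvd, hbiff⟩ := classify p m s theta lc iotf Xf pif hXiotf hPfrep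
        hpif hkerf L hadd hsmul hneL
      have h1 : lQf p m iotf Xf pif b ∈ L :=
        (hbiff _).mpr ⟨1, (one_mul _).symm⟩
      obtain ⟨cw, hcw, hLw⟩ := h1
      have hLb : LeMem p m t iot Xp piQ J e b :=
        LeMem_congr p m t s theta lc iot Xp piQ iotf Xf pif ht hXiot hXiotf hPrep hPfrep
          hpiQ hkerQ hkerf J e hcw.symm hLw
      obtain ⟨j, hj, qq, heq⟩ := hLb
      refine ⟨b, qq, fun _ _ => ⟨hbbd, hbdvd, ?_, ?_⟩⟩
      · have h2 : uQ p m t iot piQ ^ e * lQ p m t iot Xp piQ b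
            - uQ p m t iot piQ ^ (e + 1) * qq = j := by
          rw [heq]
          abel
        rw [h2]
        exact hj
      · intro c hLc
        exact (hbiff _).mp ⟨c, rfl, hLc⟩
    · exact ⟨0, 0, fun h1 h2 => absurd ⟨h1, h2⟩ hgood⟩
  choose bfun gfun hfun using hdata
  by_cases hJu : J ≤ Ideal.span {uQ p m t iot piQ}
  · -- case (iii)
    right; right; left
    refine ⟨hJb, hJu, ?_⟩
    have he₀pos : 1 ≤ e₀ := by
      by_contra h
      have he00 : E 0 := by
        have : e₀ = 0 := by omega
        rw [← this]
        exact Nat.find_spec hEex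
      obtain ⟨c, hb, hcne, j, hj, qq, heq⟩ := he00
      rw [pow_zero, one_mul, zero_add, pow_one] at heq
      obtain ⟨qj, hqj⟩ := (mem_span_uQ p m t theta iot Xp piQ hXiot hPrep hpiQ j).mp (hJu hj)
      apply hcne
      refine lemA p m t s theta lc iot Xp piQ ht hXiot hPrep hpiQ hkerQ c hb ⟨qj + qq, ?_⟩
      rw [heq, hqj, mul_add]
    set n := t - e₀ with hn
    have hexp : ∀ j : Fin n, t - (j : ℕ) = (t - 1 - (j : ℕ)) + 1 := by
      intro j
      have := j.isLt
      omega
    have hrange : ∀ j : Fin n, e₀ ≤ t - 1 - (j : ℕ) ∧ t - 1 - (j : ℕ) < t := by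
      intro j
      have := j.isLt
      omega
    have hgenJ : ∀ j : Fin n,
        uQ p m t iot piQ ^ (t - 1 - (j : ℕ)) * lQ p m t iot Xp piQ (bfun (t - 1 - (j : ℕ)))
          - uQ p m t iot piQ ^ (t - (j : ℕ)) * gfun (t - 1 - (j : ℕ)) ∈ J := by
      intro j
      rw [hexp j]
      exact (hfun _ (hrange j).1 (hrange j).2).2.2.1
    refine ⟨n, fun j => (j : ℕ), fun j => bfun (t - 1 - (j : ℕ)),
      fun j => gfun (t - 1 - (j : ℕ)), fun a b h => h, ?_, ?_, ?_, ?_⟩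
    · intro j
      show (j : ℕ) ≤ t - 2
      have := j.isLt
      omega
    · intro j
      exact hInB _ (hfun _ (hrange j).1 (hrange j).2).1 (hfun _ (hrange j).1 (hrange j).2).2.1
    · -- J = span of generators
      refine le_antisymm ?_ ?_
      · -- J ≤ span
        intro z hz
        refine main_span p m t s theta lc iot Xp piQ iotf Xf pif ht hXiot hXiotf hPrep hPfrep
          hpiQ hkerQ hkerf hTlam J _ ?_ ?_ t z hz
          ⟨z, by rw [Nat.sub_self, pow_zero, one_mul]⟩
        · rintro _ ⟨j, rfl⟩
          exact hgenJ j
        · intro e het c hb hLe hcne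
          have hee₀ : e₀ ≤ e := by
            by_contra hlt
            exact hnotE e (by omega) ⟨c, hb, hcne, hLe⟩
          have hprops := hfun e hee₀ het
          refine ⟨bfun e, -(gfun e), ?_, ?_⟩
          · refine ⟨⟨t - 1 - e, by omega⟩, ?_⟩
            show uQ p m t iot piQ ^ (t - 1 - (t - 1 - e)) * lQ p m t iot Xp piQ
                (bfun (t - 1 - (t - 1 - e)))
              - uQ p m t iot piQ ^ (t - (t - 1 - e)) * gfun (t - 1 - (t - 1 - e)) = _
            rw [show t - 1 - (t - 1 - e) = e by omega, show t - (t - 1 - e) = e + 1 by omega,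
              mul_neg, sub_eq_add_neg]
          · obtain ⟨hh, hhh⟩ := hprops.2.2.2 c hLe
            obtain ⟨gh, rfl⟩ := hpif hh
            obtain ⟨hfin, hgfin, -⟩ := hPfrep gh
            refine ⟨hfin, ?_⟩
            rw [hhh, lQf_conv p m theta iotf Xf pif hXiotf,
              show lQf p m iotf Xf pif hfin = pif gh from by rw [hgfin]; rfl]
      · -- span ≤ J
        rw [Submodule.span_le]
        rintro _ ⟨j, rfl⟩
        exact hgenJ j
    · -- side condition
      intro j k hjk cc g hmem
      have hsub : Submodule.span Q ((fun l : Fin n =>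
          uQ p m t iot piQ ^ (t - 1 - (l : ℕ)) * lQ p m t iot Xp piQ (bfun (t - 1 - (l : ℕ)))
            - uQ p m t iot piQ ^ (t - (l : ℕ)) * gfun (t - 1 - (l : ℕ))) '' {l | k ≤ l}) ≤ J := by
        rw [Submodule.span_le]
        rintro _ ⟨l, -, rfl⟩
        exact hgenJ l
      have hin : uQ p m t iot piQ ^ (t - 1 - (j : ℕ)) * lQ p m t iot Xp piQ cc
          + uQ p m t iot piQ ^ (t - (j : ℕ)) * g ∈ J := hsub hmem
      have hLe : LeMem p m t iot Xp piQ J (t - 1 - (j : ℕ)) cc := by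
        refine ⟨_, hin, -g, ?_⟩
        rw [hexp j, mul_neg]
        abel
      exact (hfun _ (hrange j).1 (hrange j).2).2.2.2 cc hLe
  · -- case (iv)
    by_cases hJt : J = ⊤
    · exact Or.inr (Or.inl hJt)
    right; right; right
    refine ⟨hJt, hJu, ?_⟩
    have hE0 : E 0 := by
      obtain ⟨z, hz, hznotin⟩ := SetLike.not_le_iff_exists.mp hJu
      obtain ⟨a, q₂, hab, hq₂⟩ :=
        decompQ p m t s theta lc iot Xp piQ ht hXiot hPrep hpiQ hTlam hkerQ z
      have ha0 : a ≠ 0 := by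
        rintro rfl
        apply hznotin
        rw [hq₂, lQ_zero, zero_add]
        exact (mem_span_uQ p m t theta iot Xp piQ hXiot hPrep hpiQ _).mpr ⟨q₂, rfl⟩
      refine ⟨a, hab, ha0, z, hz, -q₂, ?_⟩
      rw [pow_zero, one_mul, pow_one, hq₂, mul_neg]
      abel
    have he₀0 : e₀ = 0 := by
      have := Nat.find_min' hEex hE0
      omega
    have hEallt : ∀ e, e < t → e₀ ≤ e := by omega
    set n := t - 1 with hn
    have hexp : ∀ j : Fin n, t - (j : ℕ) = (t - 1 - (j : ℕ)) + 1 := by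
      intro j
      have := j.isLt
      omega
    have hrange : ∀ j : Fin n, e₀ ≤ t - 1 - (j : ℕ) ∧ t - 1 - (j : ℕ) < t := by
      intro j
      have := j.isLt
      omega
    have hgenJ : ∀ j : Fin n,
        uQ p m t iot piQ ^ (t - 1 - (j : ℕ)) * lQ p m t iot Xp piQ (bfun (t - 1 - (j : ℕ)))
          - uQ p m t iot piQ ^ (t - (j : ℕ)) * gfun (t - 1 - (j : ℕ)) ∈ J := by
      intro j
      rw [hexp j]
      exact (hfun _ (hrange j).1 (hrange j).2).2.2.1
    have hprops0 := hfun 0 (by omega) ht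
    have hz₀J : lQ p m t iot Xp piQ (bfun 0) + uQ p m t iot piQ * (-(gfun 0)) ∈ J := by
      have h3 := hprops0.2.2.1
      rw [pow_zero, one_mul, zero_add, pow_one] at h3
      rw [mul_neg, ← sub_eq_add_neg]
      exact h3
    refine ⟨bfun 0, -(gfun 0), Submodule.span Q (Set.range (fun j : Fin n =>
      uQ p m t iot piQ ^ (t - 1 - (j : ℕ)) * lQ p m t iot Xp piQ (bfun (t - 1 - (j : ℕ)))
        - uQ p m t iot piQ ^ (t - (j : ℕ)) * gfun (t - 1 - (j : ℕ)))),
      hInB _ hprops0.1 hprops0.2.1, ?_, ?_⟩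
    · -- TypeTwo for I
      refine ⟨n, fun j => (j : ℕ), fun j => bfun (t - 1 - (j : ℕ)),
        fun j => gfun (t - 1 - (j : ℕ)), fun a b h => h, ?_, ?_, rfl, ?_⟩
      · intro j
        show (j : ℕ) ≤ t - 2
        have := j.isLt
        omega
      · intro j
        exact hInB _ (hfun _ (hrange j).1 (hrange j).2).1
          (hfun _ (hrange j).1 (hrange j).2).2.1
      · intro j k hjk cc g hmem
        have hsub : Submodule.span Q ((fun l : Fin n =>
            uQ p m t iot piQ ^ (t - 1 - (l : ℕ)) * lQ p m t iot Xp piQ (bfun (t - 1 - (l : ℕ)))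
              - uQ p m t iot piQ ^ (t - (l : ℕ)) * gfun (t - 1 - (l : ℕ))) '' {l | k ≤ l}) ≤ J := by
          rw [Submodule.span_le]
          rintro _ ⟨l, -, rfl⟩
          exact hgenJ l
        have hin : uQ p m t iot piQ ^ (t - 1 - (j : ℕ)) * lQ p m t iot Xp piQ cc
            + uQ p m t iot piQ ^ (t - (j : ℕ)) * g ∈ J := hsub hmem
        have hLe : LeMem p m t iot Xp piQ J (t - 1 - (j : ℕ)) cc := by
          refine ⟨_, hin, -g, ?_⟩
          rw [hexp j, mul_neg]
          abel
        exact (hfun _ (hrange j).1 (hrange j).2).2.2.2 cc hLe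
    · -- J = span {z₀} ⊔ I
      refine le_antisymm ?_ ?_
      · intro z hz
        have hspan := main_span p m t s theta lc iot Xp piQ iotf Xf pif ht hXiot hXiotf hPrep
          hPfrep hpiQ hkerQ hkerf hTlam J
          ({lQ p m t iot Xp piQ (bfun 0) + uQ p m t iot piQ * (-(gfun 0))} ∪ Set.range
            (fun j : Fin n =>
              uQ p m t iot piQ ^ (t - 1 - (j : ℕ)) * lQ p m t iot Xp piQ (bfun (t - 1 - (j : ℕ)))
                - uQ p m t iot piQ ^ (t - (j : ℕ)) * gfun (t - 1 - (j : ℕ))))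
          ?_ ?_ t z hz ⟨z, by rw [Nat.sub_self, pow_zero, one_mul]⟩
        · rwa [Submodule.span_union] at hspan
        · rintro y (hy | ⟨j, rfl⟩)
          · rw [Set.mem_singleton_iff] at hy
            rw [hy]
            exact hz₀J
          · exact hgenJ j
        · intro e het c hb hLe hcne
          rcases Nat.eq_zero_or_pos e with rfl | hepos
          · refine ⟨bfun 0, -(gfun 0), ?_, ?_⟩
            · refine Set.mem_union_left _ ?_
              rw [Set.mem_singleton_iff, pow_zero, one_mul, zero_add, pow_one]
            · obtain ⟨hh, hhh⟩ := hprops0.2.2.2 c hLe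
              obtain ⟨gh, rfl⟩ := hpif hh
              obtain ⟨hfin, hgfin, -⟩ := hPfrep gh
              refine ⟨hfin, ?_⟩
              rw [hhh, lQf_conv p m theta iotf Xf pif hXiotf,
                show lQf p m iotf Xf pif hfin = pif gh from by rw [hgfin]; rfl]
          · have hprops := hfun e (by omega) het
            refine ⟨bfun e, -(gfun e), ?_, ?_⟩
            · refine Set.mem_union_right _ ⟨⟨t - 1 - e, by omega⟩, ?_⟩
              show uQ p m t iot piQ ^ (t - 1 - (t - 1 - e)) * lQ p m t iot Xp piQ
                  (bfun (t - 1 - (t - 1 - e)))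
                - uQ p m t iot piQ ^ (t - (t - 1 - e)) * gfun (t - 1 - (t - 1 - e)) = _
              rw [show t - 1 - (t - 1 - e) = e by omega, show t - (t - 1 - e) = e + 1 by omega,
                mul_neg, sub_eq_add_neg]
            · obtain ⟨hh, hhh⟩ := hprops.2.2.2 c hLe
              obtain ⟨gh, rfl⟩ := hpif hh
              obtain ⟨hfin, hgfin, -⟩ := hPfrep gh
              refine ⟨hfin, ?_⟩
              rw [hhh, lQf_conv p m theta iotf Xf pif hXiotf,
                show lQf p m iotf Xf pif hfin = pif gh from by rw [hgfin]; rfl]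
      · refine sup_le ?_ ?_
        · rw [Submodule.span_le]
          rintro y hy
          rw [Set.mem_singleton_iff] at hy
          rw [hy]
          exact hz₀J
        · rw [Submodule.span_le]
          rintro _ ⟨j, rfl⟩
          exact hgenJ j

end SkewPaper
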